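/- arXiv:0903.2032 — 10 statements merged into one kernel-verified Lean document; each statement's English description precedes it below -/
import Mathlib

section
/- If A and B are nilpotent n×n matrices with A + B = i·j, then for every polynomial p in two noncommuting variables, j · p(A,B) · i = 0. -/
open Matrix Finset

/-- Auxiliary sequence: `gseq a 0 = 1`, `gseq a (s+1) = ∑_{k ≤ s} (-1)^k a_k gseq a (s-k)`. -/
noncomputable def gseq {K : Type*} [Field K] (a : ℕ → K) : ℕ → K
  | 0 => 1
  | (s+1) => ∑ k ∈ Finset.range (s+1), (-1 : K)^k * a k * gseq a (s - k)
decreasing_by exact Nat.lt_succ_of_le (Nat.sub_le s k)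

lemma vecMulVec_mulVec' {n : ℕ} {K : Type*} [Field K] (i j w : Fin n → K) :
    vecMulVec i j *ᵥ w = (j ⬝ᵥ w) • i := by
  funext x
  simp only [vecMulVec, mulVec, dotProduct, of_apply, Pi.smul_apply, smul_eq_mul, Finset.sum_mul,
    Finset.mul_sum]
  exact Finset.sum_congr rfl fun y _ => by ring


lemma dotProduct_sum' {n : ℕ} {K : Type*} [Field K] {ι : Type*} (t : Finset ι)
    (j : Fin n → K) (f : ι → Fin n → K) :
    j ⬝ᵥ (∑ k ∈ t, f k) = ∑ k ∈ t, j ⬝ᵥ f k := by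
  simp only [dotProduct, Finset.sum_apply, Finset.mul_sum]
  exact Finset.sum_comm

lemma mulVec_sum' {n : ℕ} {K : Type*} [Field K] {ι : Type*} (t : Finset ι)
    (A : Matrix (Fin n) (Fin n) K) (f : ι → Fin n → K) :
    A *ᵥ (∑ k ∈ t, f k) = ∑ k ∈ t, A *ᵥ f k := by
  exact map_sum (Matrix.mulVecLin A) f t

section key


variable {n : ℕ} {K : Type*} [Field K]
  (A B : Matrix (Fin n) (Fin n) K) (i j : Fin n → K)

/-- Key computation: `B^s *ᵥ i` in terms of `A^k *ᵥ i`. -/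
lemma Bpow_mulVec (hB : B = vecMulVec i j - A) (s : ℕ) :
    B ^ s *ᵥ i = ∑ k ∈ Finset.range (s+1),
      ((-1 : K)^k * gseq (fun k => j ⬝ᵥ (A ^ k *ᵥ i)) (s - k)) • (A ^ k *ᵥ i) := by
  set a : ℕ → K := fun k => j ⬝ᵥ (A ^ k *ᵥ i) with ha
  induction s with
  | zero => simp [gseq]
  | succ s ih =>
      have hstep : ∀ w, B *ᵥ w = (j ⬝ᵥ w) • i - A *ᵥ w := by
        intro w
        rw [hB, Matrix.sub_mulVec, vecMulVec_mulVec']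
      rw [pow_succ', ← Matrix.mulVec_mulVec, ih, hstep]
      have hdot : j ⬝ᵥ (∑ k ∈ Finset.range (s+1),
          ((-1 : K)^k * gseq a (s - k)) • (A ^ k *ᵥ i)) =
          ∑ k ∈ Finset.range (s+1), (-1 : K)^k * a k * gseq a (s - k) := by
        rw [dotProduct_sum']
        exact Finset.sum_congr rfl fun k _ => by
          rw [dotProduct_smul, smul_eq_mul]
          show _ = _ * a k * _
          rw [ha]; ring
      rw [hdot]
      have hA : A *ᵥ (∑ k ∈ Finset.range (s+1),
          ((-1 : K)^k * gseq a (s - k)) • (A ^ k *ᵥ i)) =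
          ∑ k ∈ Finset.range (s+1),
            ((-1 : K)^k * gseq a (s - k)) • (A ^ (k+1) *ᵥ i) := by
        rw [mulVec_sum']
        exact Finset.sum_congr rfl fun k _ => by
          rw [Matrix.mulVec_smul, Matrix.mulVec_mulVec, ← pow_succ']
      rw [hA]
      rw [Finset.sum_range_succ' (fun k => ((-1 : K)^k * gseq a (s + 1 - k)) • (A ^ k *ᵥ i))]
      have h0 : ((-1 : K)^0 * gseq a (s + 1 - 0)) • (A ^ 0 *ᵥ i) = (gseq a (s+1)) • i := by
        simp
      rw [h0]
      have hg : gseq a (s+1) = ∑ k ∈ Finset.range (s+1), (-1 : K)^k * a k * gseq a (s - k) := by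
        rw [gseq]
      rw [hg]
      have hshift : ∀ k ∈ Finset.range (s+1),
          ((-1 : K)^(k+1) * gseq a (s + 1 - (k+1))) • (A ^ (k+1) *ᵥ i) =
          -(((-1 : K)^k * gseq a (s - k)) • (A ^ (k+1) *ᵥ i)) := by
        intro k _
        rw [Nat.succ_sub_succ]
        rw [← neg_smul]
        congr 1
        ring
      rw [Finset.sum_congr rfl hshift, Finset.sum_neg_distrib]
      module

end key

section key2

variable {n : ℕ} {K : Type*} [Field K]
  (A B : Matrix (Fin n) (Fin n) K) (i j : Fin n → K)

lemma a_eq_zero (hA : IsNilpotent A) (hB' : IsNilpotent B)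
    (h : A + B = vecMulVec i j) : ∀ k, j ⬝ᵥ (A ^ k *ᵥ i) = 0 := by
  classical
  set a : ℕ → K := fun k => j ⬝ᵥ (A ^ k *ᵥ i) with ha
  obtain ⟨N, hN⟩ := hA
  obtain ⟨S, hS⟩ := hB'
  have hBsub : B = vecMulVec i j - A := eq_sub_of_add_eq' h
  have haN : ∀ k, N ≤ k → a k = 0 := by
    intro k hk
    have hAk : A ^ k = 0 := by
      calc A ^ k = A ^ N * A ^ (k - N) := by rw [← pow_add]; congr 1; omega
        _ = 0 := by rw [hN, zero_mul]
    simp [ha, hAk]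
  have hgS : ∀ s, S + 1 ≤ s → gseq a s = 0 := by
    intro s hs
    obtain ⟨t, rfl⟩ : ∃ t, s = t + 1 := ⟨s - 1, by omega⟩
    have hBt : B ^ t *ᵥ i = 0 := by
      have hBt0 : B ^ t = 0 := by
        calc B ^ t = B ^ S * B ^ (t - S) := by rw [← pow_add]; congr 1; omega
          _ = 0 := by rw [hS, zero_mul]
      rw [hBt0, Matrix.zero_mulVec]
    have hexp := Bpow_mulVec A B i j hBsub t
    have hjd : j ⬝ᵥ (B ^ t *ᵥ i) = gseq a (t + 1) := by
      rw [hexp, dotProduct_sum']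
      rw [show gseq a (t+1) = ∑ k ∈ Finset.range (t+1), (-1:K)^k * a k * gseq a (t - k) from
        by rw [gseq]]
      exact Finset.sum_congr rfl fun k _ => by
        rw [dotProduct_smul, smul_eq_mul]
        show _ = _ * a k * _
        rw [ha]; ring
    rw [hBt] at hjd
    rw [← hjd, dotProduct_zero]
  intro k0'
  by_contra hne
  have hk0'N : k0' < N := by
    by_contra hge
    exact hne (haN k0' (by omega))
  set T : Finset ℕ := (Finset.range N).filter (fun k => a k ≠ 0) with hT
  have hTne : T.Nonempty := ⟨k0', by simp [hT, Finset.mem_filter, Finset.mem_range, hk0'N, hne]; exact hne⟩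
  set k0 := T.max' hTne with hk0
  have hak0 : a k0 ≠ 0 := (Finset.mem_filter.mp (T.max'_mem hTne)).2
  have hkmax : ∀ k, k0 < k → a k = 0 := by
    intro k hk
    by_contra hk'
    rcases le_or_gt N k with hNk | hkN
    · exact hk' (haN k hNk)
    · have hmem : k ∈ T := Finset.mem_filter.mpr ⟨Finset.mem_range.mpr hkN, hk'⟩
      exact absurd (T.le_max' k hmem) (by omega)
  set T' : Finset ℕ := (Finset.range (S + 2)).filter (fun s => gseq a s ≠ 0) with hT'
  have hT'ne : T'.Nonempty := by
    refine ⟨0, Finset.mem_filter.mpr ⟨Finset.mem_range.mpr (by omega), ?_⟩⟩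
    rw [show gseq a 0 = 1 from by rw [gseq]]
    exact one_ne_zero
  set s0 := T'.max' hT'ne with hs0
  have hgs0 : gseq a s0 ≠ 0 := (Finset.mem_filter.mp (T'.max'_mem hT'ne)).2
  have hsmax : ∀ s, s0 < s → gseq a s = 0 := by
    intro s hs
    by_contra hs'
    rcases le_or_gt (S + 2) s with hSs | hsS
    · exact hs' (hgS s (by omega))
    · have hmem : s ∈ T' := Finset.mem_filter.mpr ⟨Finset.mem_range.mpr hsS, hs'⟩
      exact absurd (T'.le_max' s hmem) (by omega)
  have hzero : gseq a (s0 + k0 + 1) = 0 := hsmax _ (by omega)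
  rw [gseq] at hzero
  have hsingle : ∑ k ∈ Finset.range (s0 + k0 + 1), (-1:K)^k * a k * gseq a (s0 + k0 - k)
      = (-1:K)^k0 * a k0 * gseq a s0 := by
    rw [Finset.sum_eq_single k0]
    · congr 2
      omega
    · intro k hk hkne
      rcases lt_or_gt_of_ne hkne with h1 | h2
      · rw [hsmax (s0 + k0 - k) (by omega), mul_zero]
      · rw [hkmax k h2]; ring
    · intro hk
      exact absurd (Finset.mem_range.mpr (by omega)) hk
  rw [hsingle] at hzero
  exact (mul_ne_zero (mul_ne_zero (pow_ne_zero k0 (neg_ne_zero.mpr one_ne_zero)) hak0) hgs0)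
    hzero

end key2

theorem stmt1 {n : ℕ} {K : Type*} [Field K]
    (A B : Matrix (Fin n) (Fin n) K) (i j : Fin n → K)
    (hA : IsNilpotent A) (hB : IsNilpotent B)
    (h : A + B = Matrix.vecMulVec i j) :
    ∀ p : FreeAlgebra K (Fin 2),
      j ⬝ᵥ ((FreeAlgebra.lift K ![A, B] p) *ᵥ i) = 0 := by
  intro p
  have hBsub : B = vecMulVec i j - A := eq_sub_of_add_eq' h
  have ha := a_eq_zero A B i j hA hB h
  set U : Submodule K (Fin n → K) := Submodule.span K (Set.range fun k : ℕ => A ^ k *ᵥ i)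
    with hU
  have hiU : i ∈ U := Submodule.subset_span ⟨0, by simp⟩
  have hjU : ∀ u ∈ U, j ⬝ᵥ u = 0 := by
    intro u hu
    induction hu using Submodule.span_induction with
    | mem x hx => obtain ⟨k, rfl⟩ := hx; exact ha k
    | zero => exact dotProduct_zero j
    | add x y _ _ hx hy => rw [dotProduct_add, hx, hy, add_zero]
    | smul c x _ hx => rw [dotProduct_smul, hx, smul_zero]
  have hAU : ∀ u ∈ U, A *ᵥ u ∈ U := by
    intro u hu
    induction hu using Submodule.span_induction with
    | mem x hx =>
        obtain ⟨k, rfl⟩ := hx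
        exact Submodule.subset_span ⟨k + 1, by rw [Matrix.mulVec_mulVec, ← pow_succ']⟩
    | zero => rw [Matrix.mulVec_zero]; exact U.zero_mem
    | add x y _ _ hx hy => rw [Matrix.mulVec_add]; exact U.add_mem hx hy
    | smul c x _ hx => rw [Matrix.mulVec_smul]; exact U.smul_mem c hx
  have hBU : ∀ u ∈ U, B *ᵥ u ∈ U := by
    intro u hu
    rw [hBsub, Matrix.sub_mulVec, vecMulVec_mulVec', hjU u hu, zero_smul, zero_sub]
    exact U.neg_mem (hAU u hu)
  have key : ∀ q : FreeAlgebra K (Fin 2), ∀ u ∈ U, (FreeAlgebra.lift K ![A, B] q) *ᵥ u ∈ U := by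
    intro q
    induction q using FreeAlgebra.induction with
    | grade0 r =>
        intro u hu
        rw [AlgHom.commutes, Algebra.algebraMap_eq_smul_one, Matrix.smul_mulVec,
          Matrix.one_mulVec]
        exact U.smul_mem r hu
    | grade1 x =>
        intro u hu
        rw [FreeAlgebra.lift_ι_apply]
        fin_cases x
        · exact hAU u hu
        · exact hBU u hu
    | mul p q hp hq =>
        intro u hu
        rw [_root_.map_mul, ← Matrix.mulVec_mulVec]
        exact hp _ (hq u hu)
    | add p q hp hq =>
        intro u hu
        rw [_root_.map_add, Matrix.add_mulVec]
        exact U.add_mem (hp u hu) (hq u hu)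
  exact hjU _ (key p i hiU)
end

section
/- If A and B are nilpotent n×n matrices with A + B = i·j, then (A+B) vanishes on the smallest subspace of K^n containing i and invariant under both A and B. Equivalently, (A+B)·p(A,B)·i = 0 for every noncommutative polynomial p. -/
open Matrix Polynomial

set_option maxHeartbeats 1000000
set_option synthInstance.maxHeartbeats 400000

section aux

variable {m : ℕ} {F : Type*} [Field F]

lemma aux_charpoly (N : Matrix (Fin m) (Fin m) F) (hN : IsNilpotent N) :
    N.charpoly = X ^ m := by
  have h := Matrix.isNilpotent_charpoly_sub_pow_of_isNilpotent hN
  rw [Fintype.card_fin] at h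
  exact sub_eq_zero.mp h.eq_zero

lemma aux_pow_eq_zero (N : Matrix (Fin m) (Fin m) F) (hN : IsNilpotent N) : N ^ m = 0 := by
  have h := N.aeval_self_charpoly
  rw [aux_charpoly N hN] at h
  simpa using h

lemma aux_det (t : F) (N : Matrix (Fin m) (Fin m) F) (hN : IsNilpotent N) :
    (t • (1 : Matrix (Fin m) (Fin m) F) - N).det = t ^ m := by
  have h1 : t • (1 : Matrix (Fin m) (Fin m) F) - N = (charmatrix N).map (evalRingHom t) := by
    ext a b
    by_cases hab : a = b <;>
      simp [hab, charmatrix_apply, Matrix.one_apply, Matrix.diagonal_apply, Matrix.smul_apply]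
  rw [h1]
  have h2 : (N.charmatrix.map (evalRingHom t)).det = evalRingHom t N.charmatrix.det :=
    ((evalRingHom t).map_det N.charmatrix).symm
  have h3 : N.charmatrix.det = N.charpoly := rfl
  rw [h2, h3, aux_charpoly N hN]
  simp

end aux

lemma aux_vecMulVec_mulVec {n : ℕ} {K : Type*} [Field K] (i j v : Fin n → K) :
    Matrix.vecMulVec i j *ᵥ v = (j ⬝ᵥ v) • i := by
  ext a
  simp only [vecMulVec, mulVec, dotProduct, Pi.smul_apply, smul_eq_mul, of_apply,
    Finset.sum_mul, Finset.mul_sum]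
  exact Finset.sum_congr rfl fun b _ => by ring

lemma aux_vecMul_smulM {n : ℕ} {F : Type*} [Field F] (j : Fin n → F) (g : F)
    (P : Matrix (Fin n) (Fin n) F) : j ᵥ* (g • P) = g • (j ᵥ* P) := by
  ext b
  simp only [vecMul, dotProduct, Matrix.smul_apply, Pi.smul_apply, smul_eq_mul, Finset.mul_sum]
  exact Finset.sum_congr rfl fun y _ => by ring

lemma aux_sum_dot {n : ℕ} {F : Type*} [Field F] (j i : Fin n → F) (s : Finset ℕ) (g : ℕ → F)
    (P : ℕ → Matrix (Fin n) (Fin n) F) :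
    j ᵥ* (∑ l ∈ s, g l • P l) ⬝ᵥ i = ∑ l ∈ s, g l * (j ᵥ* P l ⬝ᵥ i) := by
  induction s using Finset.cons_induction with
  | empty => simp
  | cons a s ha ih =>
    rw [Finset.sum_cons, Finset.sum_cons, Matrix.vecMul_add, add_dotProduct, ih,
      aux_vecMul_smulM, smul_dotProduct]
    rfl

lemma aux_map_quad {n : ℕ} {K F : Type*} [Field K] [Field F] (f : K →+* F) (j i : Fin n → K)
    (P : Matrix (Fin n) (Fin n) K) :
    ((fun a => f (j a)) ᵥ* P.map f) ⬝ᵥ (fun a => f (i a)) = f (j ᵥ* P ⬝ᵥ i) := by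
  simp only [vecMul, dotProduct, Matrix.map_apply, map_sum, _root_.map_mul]

lemma aux_key {n : ℕ} {K : Type*} [Field K]
    (A B : Matrix (Fin n) (Fin n) K) (i j : Fin n → K)
    (hA : IsNilpotent A) (hB : IsNilpotent B)
    (h : A + B = Matrix.vecMulVec i j) :
    ∀ k : ℕ, j ⬝ᵥ (A ^ k *ᵥ i) = 0 := by
  have hAn : A ^ n = 0 := aux_pow_eq_zero A hA
  intro k
  rcases lt_or_ge k n with hk | hk
  swap
  · have hAk : A ^ k = 0 := by
      calc A ^ k = A ^ n * A ^ (k - n) := by rw [← pow_add]; congr 1; omega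
      _ = 0 := by rw [hAn, zero_mul]
    simp [hAk]
  have hn : 0 < n := lt_of_le_of_lt (Nat.zero_le k) hk
  classical
  set F := RatFunc K with hF
  set f : K →+* F := (algebraMap K F : K →+* F) with hf
  set t : F := RatFunc.X with ht
  have htne : t ≠ 0 := RatFunc.X_ne_zero
  set A' : Matrix (Fin n) (Fin n) F := f.mapMatrix A with hA'def
  set B' : Matrix (Fin n) (Fin n) F := f.mapMatrix B with hB'def
  have hA' : IsNilpotent A' := hA.map f.mapMatrix
  have hB' : IsNilpotent B' := hB.map f.mapMatrix
  have hA'pow : ∀ m : ℕ, A' ^ m = f.mapMatrix (A ^ m) := fun m => (map_pow f.mapMatrix A m).symm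
  have hA'n : A' ^ n = 0 := by rw [hA'pow, hAn, map_zero]
  set M : Matrix (Fin n) (Fin n) F := t • (1 : Matrix (Fin n) (Fin n) F) + A' with hM
  set N : Matrix (Fin n) (Fin n) F :=
    ∑ l ∈ Finset.range n, ((-1 : F) ^ l * (t ^ (l + 1))⁻¹) • A' ^ l with hN
  set c : ℕ → Matrix (Fin n) (Fin n) F :=
    fun l => ((-1 : F) ^ l * (t ^ l)⁻¹) • A' ^ l with hc
  have hMN : M * N = 1 := by
    have step : M * N = ∑ l ∈ Finset.range n, (c l - c (l + 1)) := by
      rw [Finset.mul_sum]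
      refine Finset.sum_congr rfl fun l _ => ?_
      rw [Matrix.mul_smul, hM, add_mul, Matrix.smul_mul, one_mul, ← pow_succ', smul_add,
        smul_smul]
      have e1 : (-1 : F) ^ l * (t ^ (l + 1))⁻¹ * t = (-1 : F) ^ l * (t ^ l)⁻¹ := by
        rw [pow_succ]
        rw [mul_inv, mul_assoc, mul_assoc, inv_mul_cancel₀ htne]
        ring
      have e2 : (-1 : F) ^ l * (t ^ (l + 1))⁻¹ = -((-1 : F) ^ (l + 1) * (t ^ (l + 1))⁻¹) := by
        rw [pow_succ]
        ring
      rw [e1, e2]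
      simp only [hc, sub_eq_add_neg, neg_smul]
    rw [step, Finset.sum_range_sub' c, hc]
    simp [hA'n]
  have hMdet : M.det = t ^ n := by
    have : M = t • (1 : Matrix (Fin n) (Fin n) F) - (-A') := by rw [sub_neg_eq_add]
    rw [this]
    exact aux_det t (-A') hA'.neg
  have hMunit : IsUnit M.det := Matrix.isUnit_det_of_right_inverse hMN
  have hMinv : M⁻¹ = N := Matrix.inv_eq_right_inv hMN
  set i' : Fin n → F := fun a => f (i a) with hi'
  set j' : Fin n → F := fun a => f (j a) with hj'
  have hBeq : B = vecMulVec i j - A := eq_sub_of_add_eq' h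
  have hB'eq : B' = vecMulVec i' j' - A' := by
    rw [hB'def, hBeq, map_sub]
    congr 1
    ext a b
    simp [vecMulVec_apply, _root_.map_mul, hi', hj']
  have hvv : t • (1 : Matrix (Fin n) (Fin n) F) - B'
      = M + Matrix.replicateCol Unit i' * Matrix.replicateRow Unit (-j') := by
    rw [← vecMulVec_eq, hB'eq, hM]
    have : vecMulVec i' (-j') = -vecMulVec i' j' := by
      ext a b; simp [vecMulVec_apply]; exact mul_neg _ _
    rw [this]
    abel
  have hdet1 : (t • (1 : Matrix (Fin n) (Fin n) F) - B').det = t ^ n := aux_det t B' hB'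
  have hdet2 := Matrix.det_add_replicateCol_mul_replicateRow (ι := Unit) hMunit i' (-j')
  have hdet3 : (1 + Matrix.replicateRow Unit (-j') * M⁻¹ * Matrix.replicateCol Unit i').det
      = 1 + ((-j') ᵥ* N ⬝ᵥ i') := by
    rw [hMinv, ← Matrix.replicateRow_vecMul, Matrix.det_unique, Matrix.add_apply, Matrix.one_apply_eq,
      Matrix.replicateRow_mul_replicateCol_apply]
  have hx : j' ᵥ* N ⬝ᵥ i' = 0 := by
    have e : t ^ n = t ^ n * (1 + ((-j') ᵥ* N ⬝ᵥ i')) := by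
      rw [← hMdet, ← hdet3, ← hdet2, ← hvv, hdet1, hMdet]
    have htn : (t : F) ^ n ≠ 0 := pow_ne_zero _ htne
    have e2 : (1 : F) + ((-j') ᵥ* N ⬝ᵥ i') = 1 :=
      mul_left_cancel₀ htn (by rw [mul_one, ← e])
    have e3 : ((-j') ᵥ* N ⬝ᵥ i') = 0 := by
      have e2' := e2
      rwa [add_eq_left] at e2'
    rw [Matrix.neg_vecMul, neg_dotProduct] at e3
    exact neg_eq_zero.mp e3
  have hexp : j' ᵥ* N ⬝ᵥ i' = ∑ l ∈ Finset.range n,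
      ((-1:F)^l * (t^(l+1))⁻¹) * f (j ⬝ᵥ (A ^ l *ᵥ i)) := by
    rw [hN, aux_sum_dot]
    refine Finset.sum_congr rfl fun l _ => ?_
    congr 1
    rw [hA'pow l, RingHom.mapMatrix_apply, dotProduct_mulVec j (A^l) i]
    exact aux_map_quad f j i (A^l)
  have hsum : ∑ l ∈ Finset.range n,
      ((-1:F)^l * (t^(l+1))⁻¹) * f (j ⬝ᵥ (A ^ l *ᵥ i)) = 0 := by rw [← hexp, hx]
  have hsum2 : ∑ l ∈ Finset.range n,
      ((-1:F)^l * t^(n-1-l)) * f (j ⬝ᵥ (A ^ l *ᵥ i)) = 0 := by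
    have hterm : ∀ l ∈ Finset.range n, ((-1:F)^l * t^(n-1-l)) * f (j ⬝ᵥ (A ^ l *ᵥ i))
        = t^n * (((-1:F)^l * (t^(l+1))⁻¹) * f (j ⬝ᵥ (A ^ l *ᵥ i))) := by
      intro l hl
      rw [Finset.mem_range] at hl
      have h1 : t ^ (n - 1 - l) = t ^ n * (t ^ (l+1))⁻¹ := by
        rw [← pow_sub₀ t htne (by omega : l + 1 ≤ n)]
        congr 1
        omega
      rw [h1]; ring
    rw [Finset.sum_congr rfl hterm, ← Finset.mul_sum, hsum, mul_zero]
  set u : ℕ → K := fun l => j ⬝ᵥ (A ^ l *ᵥ i) with hu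
  set q : Polynomial K := ∑ l ∈ Finset.range n,
      Polynomial.C ((-1:K)^l * u l) * Polynomial.X ^ (n-1-l) with hq
  have hmapq : algebraMap (Polynomial K) F q = 0 := by
    rw [hq, map_sum, ← hsum2]
    refine Finset.sum_congr rfl fun l _ => ?_
    rw [_root_.map_mul, map_pow, RatFunc.algebraMap_X, RatFunc.algebraMap_C]
    rw [_root_.map_mul, map_pow, map_neg, _root_.map_one]
    have hfC : ∀ a : K, RatFunc.C a = f a := fun a => by rw [hf, RatFunc.algebraMap_eq_C]
    rw [hfC]
    ring
  have hq0 : q = 0 := RatFunc.algebraMap_injective K (by rw [hmapq, map_zero])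
  have hco : ((-1:K)^k * u k) = 0 := by
    have h0 : q.coeff (n - 1 - k) = 0 := by rw [hq0, Polynomial.coeff_zero]
    rw [hq, Polynomial.finset_sum_coeff] at h0
    have hterm : ∀ l ∈ Finset.range n,
        (Polynomial.C ((-1:K)^l * u l) * Polynomial.X ^ (n-1-l)).coeff (n-1-k)
        = if l = k then (-1:K)^k * u k else 0 := by
      intro l hl
      rw [Finset.mem_range] at hl
      rw [Polynomial.coeff_C_mul_X_pow]
      by_cases hlk : l = k
      · subst hlk; simp
      · rw [if_neg (by omega), if_neg hlk]
    rw [Finset.sum_congr rfl hterm, Finset.sum_ite_eq' (Finset.range n) k,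
      if_pos (Finset.mem_range.mpr hk)] at h0
    exact h0
  have hne : ((-1:K)^k) ≠ 0 := pow_ne_zero _ (by norm_num)
  exact (mul_eq_zero.mp hco).resolve_left hne

theorem stmt2 {n : ℕ} {K : Type*} [Field K]
    (A B : Matrix (Fin n) (Fin n) K) (i j : Fin n → K)
    (hA : IsNilpotent A) (hB : IsNilpotent B)
    (h : A + B = Matrix.vecMulVec i j) :
    (∀ v ∈ Submodule.span K
        (Set.range fun p : FreeAlgebra K (Fin 2) => (FreeAlgebra.lift K ![A, B] p) *ᵥ i),
      (A + B) *ᵥ v = 0) ∧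
    ∀ p : FreeAlgebra K (Fin 2),
      (A + B) *ᵥ ((FreeAlgebra.lift K ![A, B] p) *ᵥ i) = 0 := by
  classical
  have key := aux_key A B i j hA hB h
  let φ : ℕ → ((Fin n → K) →ₗ[K] K) := fun m =>
    { toFun := fun v => j ⬝ᵥ (A ^ m *ᵥ v)
      map_add' := fun x y => by
        show j ⬝ᵥ (A ^ m *ᵥ (x + y)) = j ⬝ᵥ (A ^ m *ᵥ x) + j ⬝ᵥ (A ^ m *ᵥ y)
        rw [Matrix.mulVec_add, dotProduct_add]
      map_smul' := fun c x => by
        show j ⬝ᵥ (A ^ m *ᵥ (c • x)) = c • (j ⬝ᵥ (A ^ m *ᵥ x))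
        rw [Matrix.mulVec_smul, dotProduct_smul] }
  let U : Submodule K (Fin n → K) := ⨅ m : ℕ, LinearMap.ker (φ m)
  have hmemU : ∀ v, v ∈ U ↔ ∀ m, j ⬝ᵥ (A ^ m *ᵥ v) = 0 := by
    intro v
    simp [U, Submodule.mem_iInf, LinearMap.mem_ker, φ, LinearMap.coe_mk]
  have hiU : i ∈ U := (hmemU i).mpr key
  have hAU : ∀ v ∈ U, A *ᵥ v ∈ U := by
    intro v hv
    rw [hmemU]
    intro m
    rw [Matrix.mulVec_mulVec, ← pow_succ]
    exact (hmemU v).mp hv (m + 1)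
  have hBeq : B = vecMulVec i j - A := eq_sub_of_add_eq' h
  have hBU : ∀ v ∈ U, B *ᵥ v ∈ U := by
    intro v hv
    have hv' := (hmemU v).mp hv
    rw [hmemU]
    intro m
    have hv0 : j ⬝ᵥ v = 0 := by simpa using hv' 0
    rw [hBeq, Matrix.sub_mulVec, aux_vecMulVec_mulVec, hv0, zero_smul, zero_sub,
      Matrix.mulVec_neg, dotProduct_neg, Matrix.mulVec_mulVec, ← pow_succ, hv' (m + 1), neg_zero]
  have hlift : ∀ p : FreeAlgebra K (Fin 2), ∀ v ∈ U, (FreeAlgebra.lift K ![A, B] p) *ᵥ v ∈ U := by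
    intro p
    induction p using FreeAlgebra.induction with
    | grade0 r =>
      intro v hv
      rw [AlgHom.commutes, Algebra.algebraMap_eq_smul_one, Matrix.smul_mulVec,
        Matrix.one_mulVec]
      exact U.smul_mem r hv
    | grade1 x =>
      intro v hv
      rw [FreeAlgebra.lift_ι_apply]
      fin_cases x
      · simpa using hAU v hv
      · simpa using hBU v hv
    | mul a b iha ihb =>
      intro v hv
      rw [_root_.map_mul, ← Matrix.mulVec_mulVec]
      exact iha _ (ihb v hv)
    | add a b iha ihb =>
      intro v hv
      rw [map_add, Matrix.add_mulVec]
      exact U.add_mem (iha v hv) (ihb v hv)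
  have hU0 : ∀ v ∈ U, (A + B) *ᵥ v = 0 := by
    intro v hv
    have hv0 : j ⬝ᵥ v = 0 := by simpa using (hmemU v).mp hv 0
    rw [h, aux_vecMulVec_mulVec, hv0, zero_smul]
  have hspan : Submodule.span K
      (Set.range fun p : FreeAlgebra K (Fin 2) => (FreeAlgebra.lift K ![A, B] p) *ᵥ i) ≤ U := by
    rw [Submodule.span_le]
    rintro v ⟨p, rfl⟩
    exact hlift p i hiU
  refine ⟨fun v hv => hU0 v (hspan hv), fun p => ?_⟩
  exact hU0 _ (hlift p i hiU)
end

section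
/- If A and B are nilpotent n×n matrices with A + B = i·j, then dim K[A]i + dim jK[A] ≤ n. -/
set_option maxHeartbeats 1000000
set_option synthInstance.maxHeartbeats 400000


open Matrix Polynomial

lemma charpoly_of_nilpotent {n : ℕ} {F : Type*} [Field F]
    (D : Matrix (Fin n) (Fin n) F) (hD : IsNilpotent D) :
    D.charpoly = X ^ n := by
  have h := Matrix.isNilpotent_charpoly_sub_pow_of_isNilpotent hD
  rw [Fintype.card_fin] at h
  have h0 := h.eq_zero
  linear_combination h0

lemma pow_card_eq_zero_of_nilpotent {n : ℕ} {F : Type*} [Field F]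
    (D : Matrix (Fin n) (Fin n) F) (hD : IsNilpotent D) :
    D ^ n = 0 := by
  have := Matrix.aeval_self_charpoly D
  rw [charpoly_of_nilpotent D hD] at this
  simpa using this

lemma det_smul_one_sub {n : ℕ} {F : Type*} [Field F]
    (D : Matrix (Fin n) (Fin n) F) (t : F) :
    (t • (1 : Matrix (Fin n) (Fin n) F) - D).det = (D.charpoly).eval t := by
  have h1 : (charmatrix D).map (eval t) = t • (1 : Matrix (Fin n) (Fin n) F) - D := by
    ext a b
    by_cases hab : a = b
    · subst hab
      simp [charmatrix_apply_eq, Matrix.smul_apply, Matrix.one_apply_eq]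
    · simp [charmatrix_apply_ne _ _ _ hab, Matrix.smul_apply, Matrix.one_apply_ne hab]
  rw [← h1, Matrix.charpoly, ← coe_evalRingHom, ← RingHom.mapMatrix_apply,
    ← RingHom.map_det]

lemma det_of_nilpotent_smul {n : ℕ} {F : Type*} [Field F]
    (D : Matrix (Fin n) (Fin n) F) (hD : IsNilpotent D) (t : F) :
    (t • (1 : Matrix (Fin n) (Fin n) F) - D).det = t ^ n := by
  rw [det_smul_one_sub D t, charpoly_of_nilpotent D hD, eval_pow, eval_X]

lemma sum_mulVec_aux {m k : ℕ} {F : Type*} [Field F] {β : Type*} (s : Finset β)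
    (f : β → Matrix (Fin m) (Fin k) F) (v : Fin k → F) :
    (∑ x ∈ s, f x) *ᵥ v = ∑ x ∈ s, f x *ᵥ v := by
  ext a
  simp [Matrix.mulVec, dotProduct, Matrix.sum_apply, Finset.sum_mul, Finset.sum_apply]
  exact Finset.sum_comm

lemma dotProduct_sum_aux {k : ℕ} {F : Type*} [Field F] {β : Type*} (s : Finset β)
    (u : Fin k → F) (f : β → (Fin k → F)) :
    u ⬝ᵥ (∑ x ∈ s, f x) = ∑ x ∈ s, u ⬝ᵥ f x := by
  simp only [dotProduct, Finset.sum_apply, Finset.mul_sum]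
  exact Finset.sum_comm

lemma poly_vanish {n : ℕ} {F : Type*} [Field F]
    (A' : Matrix (Fin n) (Fin n) F) (i' j' : Fin n → F) (t : F) (htne : t ≠ 0)
    (hAn : A' ^ n = 0)
    (hdetM : (t • (1 : Matrix (Fin n) (Fin n) F) - A').det = t ^ n)
    (hdet2 : (t • (1 : Matrix (Fin n) (Fin n) F) - A' + vecMulVec i' j').det = t ^ n) :
    ∑ m ∈ Finset.range n, t ^ (n - 1 - m) * (j' ⬝ᵥ (A' ^ m *ᵥ i')) = 0 := by
  set M : Matrix (Fin n) (Fin n) F := t • 1 - A' with hM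
  have htn : (t : F) ^ n ≠ 0 := pow_ne_zero _ htne
  have hu : IsUnit M.det := by rw [hdetM]; exact isUnit_iff_ne_zero.2 htn
  have hlemma := Matrix.det_add_replicateCol_mul_replicateRow (ι := Unit) hu i' j'
  rw [← Matrix.vecMulVec_eq Unit i' j', hdet2, hdetM] at hlemma
  have hdet1 : (1 + replicateRow Unit j' * M⁻¹ * replicateCol Unit i').det = 1 :=
    (mul_left_cancel₀ htn (by rw [← hlemma, mul_one])).symm
  have hjMi : j' ⬝ᵥ (M⁻¹ *ᵥ i') = 0 := by
    have hentry : (1 + replicateRow Unit j' * M⁻¹ * replicateCol Unit i').det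
        = 1 + j' ⬝ᵥ (M⁻¹ *ᵥ i') := by
      rw [Matrix.det_unique, Matrix.add_apply, Matrix.one_apply_eq]
      congr 1
      simp only [Matrix.mul_apply, Matrix.replicateRow_apply, Matrix.replicateCol_apply, dotProduct,
        Matrix.mulVec]
      simp_rw [Finset.sum_mul, Finset.mul_sum]
      rw [Finset.sum_comm]
      exact Finset.sum_congr rfl fun x _ => Finset.sum_congr rfl fun y _ => by ring
    rw [hentry, add_eq_left] at hdet1
    exact hdet1
  -- compute the inverse explicitly
  set N : Matrix (Fin n) (Fin n) F := ∑ m ∈ Finset.range n, t ^ (n - 1 - m) • A' ^ m with hN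
  have hMN : M * N = t ^ n • 1 := by
    rw [hN, Finset.mul_sum]
    have hterm : ∀ m ∈ Finset.range n,
        M * (t ^ (n - 1 - m) • A' ^ m)
          = (fun k => t ^ (n - k) • A' ^ k) m - (fun k => t ^ (n - k) • A' ^ k) (m + 1) := by
      intro m hm
      rw [Finset.mem_range] at hm
      have h1 : n - 1 - m = n - (m + 1) := by omega
      have h2 : t ^ (n - (m + 1)) * t = t ^ (n - m) := by
        rw [← pow_succ]
        congr 1
        omega
      simp only [hM, sub_mul, Matrix.mul_smul, Matrix.one_mul, Matrix.smul_mul, h1, smul_smul]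
      rw [h2, pow_succ']
    rw [Finset.sum_congr rfl hterm, Finset.sum_range_sub']
    simp [hAn]
  have hMinv : M⁻¹ = (t ^ n)⁻¹ • N := by
    apply Matrix.inv_eq_right_inv
    rw [Matrix.mul_smul, hMN, smul_smul, inv_mul_cancel₀ htn, one_smul]
  rw [hMinv] at hjMi
  have : j' ⬝ᵥ (((t ^ n)⁻¹ • N) *ᵥ i')
      = (t ^ n)⁻¹ * ∑ m ∈ Finset.range n, t ^ (n - 1 - m) * (j' ⬝ᵥ (A' ^ m *ᵥ i')) := by
    rw [hN, Matrix.smul_mulVec, dotProduct_smul, smul_eq_mul, sum_mulVec_aux,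
      dotProduct_sum_aux]
    congr 1
    exact Finset.sum_congr rfl fun m _ => by
      rw [Matrix.smul_mulVec, dotProduct_smul, smul_eq_mul]
  rw [this] at hjMi
  rcases mul_eq_zero.mp hjMi with h0 | h0
  · exact absurd h0 (inv_ne_zero htn)
  · exact h0

lemma key_vanish {n : ℕ} {K : Type*} [Field K]
    (A B : Matrix (Fin n) (Fin n) K) (i j : Fin n → K)
    (hA : IsNilpotent A) (hB : IsNilpotent B)
    (h : A + B = Matrix.vecMulVec i j) (m : ℕ) :
    j ⬝ᵥ ((A ^ m) *ᵥ i) = 0 := by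
  have hAn : A ^ n = 0 := pow_card_eq_zero_of_nilpotent A hA
  by_cases hm : n ≤ m
  · have : A ^ m = 0 := by
      rw [← Nat.sub_add_cancel hm, pow_add, hAn, Matrix.mul_zero]
    simp [this]
  push_neg at hm
  have hA'n : (A.map (algebraMap K (RatFunc K))) ^ n = 0 := by
    rw [← RingHom.mapMatrix_apply, ← map_pow, hAn, map_zero]
  have hB'nil : IsNilpotent (-(B.map (algebraMap K (RatFunc K)))) := by
    obtain ⟨k, hk⟩ := hB
    exact IsNilpotent.neg ⟨k, by rw [← RingHom.mapMatrix_apply, ← map_pow, hk, map_zero]⟩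
  have hdetM : ((RatFunc.X : RatFunc K) • (1 : Matrix (Fin n) (Fin n) (RatFunc K))
      - A.map (algebraMap K (RatFunc K))).det = RatFunc.X ^ n :=
    det_of_nilpotent_smul _ ⟨n, hA'n⟩ _
  have hsum : A.map (algebraMap K (RatFunc K)) + B.map (algebraMap K (RatFunc K))
      = vecMulVec (fun x => algebraMap K (RatFunc K) (i x))
        (fun x => algebraMap K (RatFunc K) (j x)) := by
    ext a b
    have hab : A a b + B a b = i a * j b := by
      have := congrFun (congrFun h a) b
      simpa [Matrix.vecMulVec_apply, Matrix.add_apply] using this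
    simp only [Matrix.add_apply, Matrix.map_apply, Matrix.vecMulVec_apply]
    rw [← _root_.map_add, hab, _root_.map_mul]
  have hdet2 : ((RatFunc.X : RatFunc K) • (1 : Matrix (Fin n) (Fin n) (RatFunc K))
      - A.map (algebraMap K (RatFunc K))
      + vecMulVec (fun x => algebraMap K (RatFunc K) (i x))
        (fun x => algebraMap K (RatFunc K) (j x))).det = RatFunc.X ^ n := by
    have e : (RatFunc.X : RatFunc K) • (1 : Matrix (Fin n) (Fin n) (RatFunc K))
        - A.map (algebraMap K (RatFunc K))
        + vecMulVec (fun x => algebraMap K (RatFunc K) (i x))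
          (fun x => algebraMap K (RatFunc K) (j x))
        = (RatFunc.X : RatFunc K) • (1 : Matrix (Fin n) (Fin n) (RatFunc K))
          - (-(B.map (algebraMap K (RatFunc K)))) := by
      rw [← hsum]
      abel
    rw [e]
    exact det_of_nilpotent_smul _ hB'nil _
  have hvan := poly_vanish (A.map (algebraMap K (RatFunc K)))
    (fun x => algebraMap K (RatFunc K) (i x)) (fun x => algebraMap K (RatFunc K) (j x))
    RatFunc.X RatFunc.X_ne_zero hA'n hdetM hdet2
  have hdot : ∀ k : ℕ,
      (fun x => algebraMap K (RatFunc K) (j x)) ⬝ᵥ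
        ((A.map (algebraMap K (RatFunc K))) ^ k *ᵥ (fun x => algebraMap K (RatFunc K) (i x)))
      = algebraMap K (RatFunc K) (j ⬝ᵥ (A ^ k *ᵥ i)) := by
    intro k
    rw [← RingHom.mapMatrix_apply, ← map_pow, RingHom.mapMatrix_apply]
    simp only [dotProduct, Matrix.mulVec, Matrix.map_apply, map_sum, _root_.map_mul]
  set p : Polynomial K :=
    ∑ l ∈ Finset.range n, Polynomial.C (j ⬝ᵥ (A ^ l *ᵥ i)) * Polynomial.X ^ (n - 1 - l)
    with hpdef
  have hCmap : ∀ c : K, algebraMap (Polynomial K) (RatFunc K) (Polynomial.C c)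
      = algebraMap K (RatFunc K) c := by
    intro c
    rw [IsScalarTower.algebraMap_apply K (Polynomial K) (RatFunc K), Polynomial.algebraMap_eq]
  have hp : algebraMap (Polynomial K) (RatFunc K) p = 0 := by
    rw [hpdef, map_sum, ← hvan]
    refine Finset.sum_congr rfl fun l hl => ?_
    rw [_root_.map_mul, map_pow, RatFunc.algebraMap_X, hdot l, hCmap, mul_comm]
  have hp0 : p = 0 := RatFunc.algebraMap_injective K (by rw [hp, map_zero])
  have hco : p.coeff (n - 1 - m) = j ⬝ᵥ (A ^ m *ᵥ i) := by
    rw [hpdef, Polynomial.finset_sum_coeff, Finset.sum_eq_single m]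
    · simp [Polynomial.coeff_C_mul, Polynomial.coeff_X_pow]
    · intro l hl hlm
      rw [Finset.mem_range] at hl
      have hne : n - 1 - m ≠ n - 1 - l := by omega
      simp [Polynomial.coeff_C_mul, Polynomial.coeff_X_pow, hne]
    · intro hm'
      exact absurd (Finset.mem_range.mpr hm) hm'
  rw [hp0, Polynomial.coeff_zero] at hco
  exact hco.symm

theorem stmt4 {n : ℕ} {K : Type*} [Field K]
    (A B : Matrix (Fin n) (Fin n) K) (i j : Fin n → K)
    (hA : IsNilpotent A) (hB : IsNilpotent B)
    (h : A + B = Matrix.vecMulVec i j) :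
    Module.finrank K (Submodule.span K (Set.range fun k : ℕ => (A ^ k) *ᵥ i)) +
      Module.finrank K (Submodule.span K (Set.range fun k : ℕ => j ᵥ* (A ^ k))) ≤ n := by
  classical
  set V := Submodule.span K (Set.range fun k : ℕ => (A ^ k) *ᵥ i) with hV
  set W := Submodule.span K (Set.range fun k : ℕ => j ᵥ* (A ^ k)) with hW
  have key : ∀ k l : ℕ, (j ᵥ* (A ^ k)) ⬝ᵥ ((A ^ l) *ᵥ i) = 0 := by
    intro k l
    rw [← Matrix.dotProduct_mulVec, Matrix.mulVec_mulVec, ← pow_add]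
    exact key_vanish A B i j hA hB h (k + l)
  let f : (Fin n → K) →ₗ[K] Module.Dual K (Fin n → K) :=
    LinearMap.mk₂ K (fun w v => w ⬝ᵥ v)
      (fun a b v => add_dotProduct a b v)
      (fun c a v => smul_dotProduct c a v)
      (fun a b c => dotProduct_add a b c)
      (fun c a b => dotProduct_smul c a b)
  have hfinj : Function.Injective f := by
    intro a b hab
    funext x
    have h' := LinearMap.congr_fun hab (Pi.single x 1)
    have h'' : a ⬝ᵥ Pi.single x 1 = b ⬝ᵥ Pi.single x 1 := h'
    simpa [dotProduct_single] using h''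
  have hfapp : ∀ w v : Fin n → K, f w v = w ⬝ᵥ v := fun w v => rfl
  have hWmap : W.map f ≤ V.dualAnnihilator := by
    rw [hW, Submodule.map_span, Submodule.span_le]
    rintro _ ⟨_, ⟨k, rfl⟩, rfl⟩
    rw [SetLike.mem_coe, Submodule.mem_dualAnnihilator]
    intro v hv
    rw [hV] at hv
    induction hv using Submodule.span_induction with
    | mem x hx =>
      obtain ⟨l, rfl⟩ := hx
      exact key k l
    | zero => simp
    | add x y _ _ hx hy => rw [map_add, hx, hy, add_zero]
    | smul c x _ hx => rw [_root_.map_smul, hx, smul_zero]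
  have h1 : Module.finrank K W = Module.finrank K (W.map f) :=
    (Submodule.equivMapOfInjective f hfinj W).finrank_eq
  have h2 : Module.finrank K (W.map f) ≤ Module.finrank K V.dualAnnihilator :=
    Submodule.finrank_mono hWmap
  have h3 : Module.finrank K V.dualAnnihilator
      = Module.finrank K ((Fin n → K) ⧸ V) :=
    (Subspace.quotEquivAnnihilator V).finrank_eq.symm
  have h4 : Module.finrank K ((Fin n → K) ⧸ V) + Module.finrank K V
      = Module.finrank K (Fin n → K) := Submodule.finrank_quotient_add_finrank V
  have h5 : Module.finrank K (Fin n → K) = n := by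
    simp [Module.finrank_pi]
  rw [h3] at h2
  rw [h1]
  omega
end

section
/- Let X, Y be n×n matrices with [X,Y] = −i·j for a column vector i and row vector j (i.e., [X,Y] + ij = 0). Then for all noncommutative polynomials p, q in two variables, j·p(X,Y)·q(X,Y)·i = 0. -/
open Matrix Module

universe u

-- intertwining lemma
lemma lift_comm {F : Type*} [CommSemiring F] {V W : Type*} [AddCommMonoid V] [Module F V]
    [AddCommMonoid W] [Module F W]
    (f : V →ₗ[F] W) (X Y : Module.End F V) (X' Y' : Module.End F W)
    (hX : ∀ v, f (X v) = X' (f v)) (hY : ∀ v, f (Y v) = Y' (f v)) :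
    ∀ (p : FreeAlgebra F (Fin 2)) (v : V),
      f ((FreeAlgebra.lift F ![X, Y]) p v) = (FreeAlgebra.lift F ![X', Y']) p (f v) := by
  intro p
  induction p using FreeAlgebra.induction with
  | grade0 r => intro v; simp [Module.algebraMap_end_apply]
  | grade1 x =>
    intro v
    fin_cases x <;> simp [hX, hY]
  | mul a b ha hb => intro v; simp [_root_.map_mul, Module.End.mul_apply, ha, hb]
  | add a b ha hb => intro v; simp [map_add, LinearMap.add_apply, ha, hb]

lemma key (F : Type u) [Field F] [IsAlgClosed F] (N : ℕ) :
    ∀ (V : Type u) [AddCommGroup V] [Module F V] [FiniteDimensional F V],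
    ∀ (X Y : Module.End F V) (i : V) (j : V →ₗ[F] F),
      finrank F V ≤ N → X * Y - Y * X + j.smulRight i = 0 →
      ∀ p : FreeAlgebra F (Fin 2), j ((FreeAlgebra.lift F ![X, Y]) p i) = 0 := by
  induction N with
  | zero =>
    intro V _ _ _ X Y i j hrank _ p
    have hs : Subsingleton V := by
      rw [← Module.finrank_zero_iff (R := F)]
      omega
    have h0 : (FreeAlgebra.lift F ![X, Y]) p i = 0 := Subsingleton.elim _ _
    rw [h0, map_zero]
  | succ N ih =>
    intro V _ _ _ X Y i j hrank hrel p
    by_cases hle : finrank F V ≤ N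
    · exact ih V X Y i j hle hrel p
    have hpos : 0 < finrank F V := by omega
    have hnt : Nontrivial V := by
      rcases Module.nontrivial_of_finrank_pos hpos with h
      exact h
    -- pointwise relation
    have hrelv : ∀ v, X (Y v) - Y (X v) + j v • i = 0 := by
      intro v
      have := LinearMap.congr_fun hrel v
      simpa [Module.End.mul_apply] using this
    obtain ⟨μ, hμ⟩ := Module.End.exists_eigenvalue X
    set X₀ : Module.End F V := X - algebraMap F (Module.End F V) μ with hX₀
    have hX₀apply : ∀ v, X₀ v = X v - μ • v := by
      intro v; simp [hX₀, Module.algebraMap_end_apply]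
    -- ker X₀ ≠ ⊥
    obtain ⟨v₀, hv₀⟩ := hμ.exists_hasEigenvector
    have hv₀mem : v₀ ∈ LinearMap.ker X₀ := by
      have : X v₀ = μ • v₀ := hv₀.apply_eq_smul
      simp [LinearMap.mem_ker, hX₀apply, this]
    have hkerne : LinearMap.ker X₀ ≠ ⊥ :=
      Submodule.ne_bot_iff _ |>.2 ⟨v₀, hv₀mem, hv₀.2⟩
    have hkerpos : 0 < finrank F (LinearMap.ker X₀) := by
      rcases Nat.eq_zero_or_pos (finrank F (LinearMap.ker X₀)) with h | h
      · exact absurd (Submodule.finrank_eq_zero.mp h) hkerne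
      · exact h
    have hrk := LinearMap.finrank_range_add_finrank_ker X₀
    -- key commuting identity
    have hcomm0 : ∀ v, X₀ (Y v) = Y (X₀ v) - j v • i := by
      intro v
      have h1 := hrelv v
      rw [hX₀apply, hX₀apply]
      rw [map_sub, LinearMap.map_smul]
      have : X (Y v) = Y (X v) - j v • i := by linear_combination (norm := module) h1
      rw [this]; module
    by_cases hi : i ∈ LinearMap.range X₀
    · -- restriction to M = range X₀
      set M := LinearMap.range X₀ with hM
      have hXM : ∀ v ∈ M, X v ∈ M := by
        rintro _ ⟨u, rfl⟩
        refine ⟨X u, ?_⟩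
        rw [hX₀apply, hX₀apply, map_sub, LinearMap.map_smul]
      have hYM : ∀ v ∈ M, Y v ∈ M := by
        rintro _ ⟨u, rfl⟩
        have : Y (X₀ u) = X₀ (Y u) + j u • i := by
          rw [hcomm0 u]; module
        rw [this]
        exact M.add_mem ⟨Y u, rfl⟩ (M.smul_mem _ hi)
      set X' := X.restrict hXM with hX'
      set Y' := Y.restrict hYM with hY'
      set i' : M := ⟨i, hi⟩ with hi'
      set j' : M →ₗ[F] F := j.comp M.subtype with hj'
      have hrel' : X' * Y' - Y' * X' + j'.smulRight i' = 0 := by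
        ext m
        have : X (Y (m : V)) - Y (X (m : V)) + j (m : V) • i = 0 := hrelv m
        simpa [Module.End.mul_apply, hX', hY', hi', hj', LinearMap.restrict_apply,
          Submodule.coe_add, Submodule.coe_smul] using this
      have hrank' : finrank F M ≤ N := by omega
      have hres := ih M X' Y' i' j' hrank' hrel'
      have hcomm := lift_comm M.subtype X' Y' X Y
        (fun m => by simp [hX', LinearMap.restrict_apply])
        (fun m => by simp [hY', LinearMap.restrict_apply])
      have : (FreeAlgebra.lift F ![X, Y]) p i = ((FreeAlgebra.lift F ![X', Y']) p i' : V) := by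
        have := hcomm p i'
        simpa using this.symm
      rw [this]
      exact hres p
    · -- quotient by Nk = ker X₀
      set Nk := LinearMap.ker X₀ with hNk
      have hjN : ∀ v ∈ Nk, j v = 0 := by
        intro v hv
        by_contra hjv
        apply hi
        have hx0 : X₀ v = 0 := hv
        have : X₀ (Y v) = -(j v • i) := by rw [hcomm0 v, hx0, map_zero]; module
        refine ⟨(-(j v))⁻¹ • Y v, ?_⟩
        rw [LinearMap.map_smul, this]
        rw [← neg_smul, smul_smul, inv_mul_cancel₀ (neg_ne_zero.2 hjv), one_smul]
      have hXN : Nk ≤ Nk.comap X := by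
        intro v hv
        have hx0 : X₀ v = 0 := hv
        have : X₀ (X v) = X (X₀ v) := by
          rw [hX₀apply, hX₀apply, map_sub, LinearMap.map_smul]
        simp [Submodule.mem_comap, hNk, LinearMap.mem_ker, this, hx0]
      have hYN : Nk ≤ Nk.comap Y := by
        intro v hv
        have hx0 : X₀ v = 0 := hv
        have : X₀ (Y v) = 0 := by
          rw [hcomm0 v, hx0, map_zero, hjN v hv]; module
        simp [Submodule.mem_comap, hNk, LinearMap.mem_ker, this]
      set Xq := Nk.mapQ Nk X hXN with hXq
      set Yq := Nk.mapQ Nk Y hYN with hYq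
      have hjker : Nk ≤ LinearMap.ker j := fun v hv => hjN v hv
      set jq := Nk.liftQ j hjker with hjq
      set iq := Nk.mkQ i with hiq
      have hrelq : Xq * Yq - Yq * Xq + jq.smulRight iq = 0 := by
        apply Submodule.linearMap_qext
        ext v
        have h1 := hrelv v
        simp only [LinearMap.comp_apply, LinearMap.add_apply, LinearMap.sub_apply,
          Module.End.mul_apply, LinearMap.smulRight_apply, LinearMap.zero_apply,
          hXq, hYq, hjq, hiq, Submodule.mkQ_apply, Submodule.mapQ_apply, Submodule.liftQ_apply]
        rw [← Submodule.Quotient.mk_smul, ← Submodule.Quotient.mk_sub, ← Submodule.Quotient.mk_add, h1, Submodule.Quotient.mk_zero]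
      have hrankq : finrank F (V ⧸ Nk) ≤ N := by
        have := Submodule.finrank_quotient_add_finrank Nk
        omega
      have hres := ih (V ⧸ Nk) Xq Yq iq jq hrankq hrelq
      have hcomm := lift_comm Nk.mkQ X Y Xq Yq
        (fun v => by simp [hXq, Submodule.mapQ_apply])
        (fun v => by simp [hYq, Submodule.mapQ_apply])
      have hji : j ((FreeAlgebra.lift F ![X, Y]) p i) =
          jq (Nk.mkQ ((FreeAlgebra.lift F ![X, Y]) p i)) := by
        simp [hjq, Submodule.liftQ_apply]
      rw [hji, hcomm p i]
      exact hres p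

section glue
variable {F : Type*} [Field F] {n : ℕ}

noncomputable def dotL (j : Fin n → F) : (Fin n → F) →ₗ[F] F where
  toFun v := j ⬝ᵥ v
  map_add' a b := by simp [dotProduct, Finset.sum_add_distrib, mul_add]
  map_smul' c a := by simp [dotProduct, Finset.mul_sum, mul_left_comm]

lemma dotL_apply (j v : Fin n → F) : dotL j v = j ⬝ᵥ v := rfl

lemma matLift (A B : Matrix (Fin n) (Fin n) F) (p : FreeAlgebra F (Fin 2)) :
    ((FreeAlgebra.lift F ![A, B]) p).mulVecLin =
      (FreeAlgebra.lift F ![A.mulVecLin, B.mulVecLin]) p := by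
  induction p using FreeAlgebra.induction with
  | grade0 r =>
    apply LinearMap.ext; intro v
    simp [Algebra.algebraMap_eq_smul_one, Matrix.mulVecLin_apply,
      Matrix.smul_mulVec, Matrix.one_mulVec, Module.algebraMap_end_apply]
  | grade1 x => fin_cases x <;> simp
  | mul a b ha hb => simp [_root_.map_mul, Matrix.mulVecLin_mul, ha, hb]; rfl
  | add a b ha hb => simp [map_add, Matrix.mulVecLin_add, ha, hb]

lemma vecMulVec_mulVecLin (i j : Fin n → F) :
    (vecMulVec i j).mulVecLin = (dotL j).smulRight i := by
  apply LinearMap.ext; intro v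
  funext r
  simp only [Matrix.mulVecLin_apply, Matrix.mulVec, Matrix.vecMulVec_apply,
    LinearMap.smulRight_apply, dotL, LinearMap.coe_mk, AddHom.coe_mk,
    dotProduct, Pi.smul_apply, smul_eq_mul, Finset.sum_mul]
  exact Finset.sum_congr rfl fun x _ => by ring

lemma mapLift {K : Type*} [Field K] (φ : K →+* F) (A B : Matrix (Fin n) (Fin n) K)
    (p : FreeAlgebra K (Fin 2)) :
    ∃ p' : FreeAlgebra F (Fin 2),
      ((FreeAlgebra.lift K ![A, B]) p).map φ =
        (FreeAlgebra.lift F ![A.map φ, B.map φ]) p' := by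
  induction p using FreeAlgebra.induction with
  | grade0 r =>
    refine ⟨algebraMap F _ (φ r), ?_⟩
    ext a b
    simp [Matrix.algebraMap_matrix_apply, Matrix.map_apply, apply_ite φ]
  | grade1 x =>
    fin_cases x
    · exact ⟨FreeAlgebra.ι F 0, by simp⟩
    · exact ⟨FreeAlgebra.ι F 1, by simp⟩
  | mul a b ha hb =>
    obtain ⟨pa, hpa⟩ := ha; obtain ⟨pb, hpb⟩ := hb
    exact ⟨pa * pb, by rw [_root_.map_mul, Matrix.map_mul, hpa, hpb, _root_.map_mul]⟩
  | add a b ha hb =>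
    obtain ⟨pa, hpa⟩ := ha; obtain ⟨pb, hpb⟩ := hb
    exact ⟨pa + pb, by rw [map_add, Matrix.map_add _ (fun a b => map_add φ a b), hpa, hpb, map_add]⟩

lemma dot_map {K : Type*} [Field K] (φ : K →+* F) (j w : Fin n → K) :
    φ (j ⬝ᵥ w) = (φ ∘ j) ⬝ᵥ (φ ∘ w) := by
  simp [dotProduct, map_sum, _root_.map_mul]

lemma mulVec_map {K : Type*} [Field K] (φ : K →+* F) (A : Matrix (Fin n) (Fin n) K)
    (i : Fin n → K) : φ ∘ (A *ᵥ i) = A.map φ *ᵥ (φ ∘ i) := by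
  funext r
  simp [Matrix.mulVec, dotProduct, map_sum, _root_.map_mul, Function.comp]

end glue

theorem stmt5 {n : ℕ} {K : Type*} [Field K]
    (X Y : Matrix (Fin n) (Fin n) K) (i j : Fin n → K)
    (hc : X * Y - Y * X + Matrix.vecMulVec i j = 0) :
    ∀ p q : FreeAlgebra K (Fin 2),
      j ⬝ᵥ ((FreeAlgebra.lift K ![X, Y] p * FreeAlgebra.lift K ![X, Y] q) *ᵥ i) = 0 := by
  intro p q
  set F := AlgebraicClosure K with hF
  set φ : K →+* F := algebraMap K F with hφ
  have hinj : Function.Injective φ := φ.injective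
  set Xf := X.map φ with hXf
  set Yf := Y.map φ with hYf
  set iF : Fin n → F := φ ∘ i with hiF
  set jF : Fin n → F := φ ∘ j with hjF
  -- relation over F
  have hcF : Xf * Yf - Yf * Xf + vecMulVec iF jF = 0 := by
    ext a b
    have h0 : (X * Y - Y * X + vecMulVec i j) a b = (0 : Matrix (Fin n) (Fin n) K) a b := by
      rw [hc]
    simp only [Matrix.sub_apply, Matrix.add_apply, Matrix.mul_apply, Matrix.vecMulVec_apply,
      Matrix.zero_apply] at h0
    have h1 := congrArg φ h0
    simp only [map_add, map_sub, map_sum, _root_.map_mul, map_zero] at h1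
    simpa [hXf, hYf, hiF, hjF, Matrix.sub_apply, Matrix.add_apply, Matrix.mul_apply,
      Matrix.vecMulVec_apply, Matrix.map_apply, Function.comp] using h1
  -- to End
  set Xe := Xf.mulVecLin with hXe
  set Ye := Yf.mulVecLin with hYe
  have hrelE : Xe * Ye - Ye * Xe + (dotL jF).smulRight iF = 0 := by
    apply LinearMap.ext; intro v
    have h2 := congrArg (fun M => M *ᵥ v) hcF
    simp only [Matrix.add_mulVec, Matrix.sub_mulVec, Matrix.zero_mulVec] at h2
    have h3 : vecMulVec iF jF *ᵥ v = (jF ⬝ᵥ v) • iF := by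
      have h4 := congrFun (congrArg DFunLike.coe (vecMulVec_mulVecLin iF jF)) v
      simpa [Matrix.mulVecLin_apply, dotL_apply] using h4
    rw [h3] at h2
    simp only [LinearMap.add_apply, LinearMap.sub_apply, Module.End.mul_apply,
      LinearMap.zero_apply, LinearMap.smulRight_apply, hXe, hYe, Matrix.mulVecLin_apply,
      Matrix.mulVec_mulVec]
    simpa [dotL_apply, ← Matrix.mulVec_mulVec] using h2
  -- base change of the lifts
  obtain ⟨p', hp'⟩ := mapLift φ X Y p
  obtain ⟨q', hq'⟩ := mapLift φ X Y q
  apply hinj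
  rw [map_zero]
  rw [dot_map φ j _, mulVec_map φ _ i]
  rw [Matrix.map_mul, hp', hq', ← _root_.map_mul]
  have hmv : ∀ (A : Matrix (Fin n) (Fin n) F) (v : Fin n → F), A *ᵥ v = A.mulVecLin v :=
    fun A v => rfl
  rw [hmv, matLift]
  exact key F (finrank F (Fin n → F)) (Fin n → F) Xe Ye iF (dotL jF) le_rfl hrelE (p' * q')
end

section
/- Let X, Y be n×n matrices with [X,Y] + ij = 0. Then the perpendicular complement W = (jK⟨X,Y⟩)^⊥ = {v ∈ K^n : u·v = 0 for all u ∈ jK⟨X,Y⟩} is invariant under X and Y, and moreover the restrictions of X and Y to W commute: [X,Y] acts as zero on W. -/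
open Matrix

theorem stmt7 {n : ℕ} {K : Type*} [Field K]
    (X Y : Matrix (Fin n) (Fin n) K) (i j : Fin n → K)
    (hc : X * Y - Y * X + Matrix.vecMulVec i j = 0) :
    ∀ v : Fin n → K,
      (∀ p : FreeAlgebra K (Fin 2), (j ᵥ* (FreeAlgebra.lift K ![X, Y] p)) ⬝ᵥ v = 0) →
      (∀ p : FreeAlgebra K (Fin 2), (j ᵥ* (FreeAlgebra.lift K ![X, Y] p)) ⬝ᵥ (X *ᵥ v) = 0) ∧
      (∀ p : FreeAlgebra K (Fin 2), (j ᵥ* (FreeAlgebra.lift K ![X, Y] p)) ⬝ᵥ (Y *ᵥ v) = 0) ∧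
      X *ᵥ (Y *ᵥ v) = Y *ᵥ (X *ᵥ v) := by
  intro v hv
  refine ⟨?_, ?_, ?_⟩
  · intro p
    have := hv (p * FreeAlgebra.ι K 0)
    simpa [dotProduct_mulVec, _root_.map_mul, vecMul_vecMul] using this
  · intro p
    have := hv (p * FreeAlgebra.ι K 1)
    simpa [dotProduct_mulVec, _root_.map_mul, vecMul_vecMul] using this
  · have hj : j ⬝ᵥ v = 0 := by simpa using hv 1
    have h2 : (X * Y - Y * X + Matrix.vecMulVec i j) *ᵥ v = 0 := by rw [hc]; simp
    have h3 : Matrix.vecMulVec i j *ᵥ v = 0 := by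
      ext k
      simp [Matrix.vecMulVec, Matrix.mulVec, dotProduct, mul_assoc, ← Finset.mul_sum]
      simp [dotProduct] at hj
      simp [hj]
    rw [add_mulVec, sub_mulVec, h3, add_zero, sub_eq_zero] at h2
    simpa [mulVec_mulVec] using h2
end

section
/- Let X, Y be nilpotent n×n matrices with [X,Y] + ij = 0. Fix the lex-deg monomial order on K[x,y] (graded, with x < y in each degree) and define the 'staircase' set λ of exponent pairs (a,b) such that X^a Y^b i is not a linear combination of {X^c Y^d i : x^a y^b < x^c y^d}. Then λ is a Young diagram: if (a,b) ∈ λ and 0 ≤ a' ≤ a, 0 ≤ b' ≤ b, then (a',b') ∈ λ. -/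
open Matrix

/-- The graded lexicographic order on monomials `x^a y^b`, with
`1 < x < y < x² < xy < y² < …`. -/
def lexdegLt (p q : ℕ × ℕ) : Prop :=
  p.1 + p.2 < q.1 + q.2 ∨ (p.1 + p.2 = q.1 + q.2 ∧ p.2 < q.2)

/-- `(a,b)` belongs to the staircase `λ`: `X^a Y^b i` is not a linear combination
of the vectors `X^c Y^d i` for strictly larger monomials `x^c y^d`. -/
def inStaircase {n : ℕ} {K : Type*} [Field K]
    (X Y : Matrix (Fin n) (Fin n) K) (i : Fin n → K) (a b : ℕ) : Prop :=
  (X ^ a * Y ^ b) *ᵥ i ∉ Submodule.span K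
    {v : Fin n → K | ∃ c d : ℕ, lexdegLt (a, b) (c, d) ∧ v = (X ^ c * Y ^ d) *ᵥ i}

namespace Stmt10Aux

variable {n : ℕ} {K : Type*} [Field K]

lemma dotProduct_map (φ : K →+* Polynomial K) (u v : Fin n → K) :
    (fun k => φ (u k)) ⬝ᵥ (fun k => φ (v k)) = φ (u ⬝ᵥ v) := by
  simp [dotProduct, map_sum]

lemma mulVec_map (φ : K →+* Polynomial K) (M : Matrix (Fin n) (Fin n) K) (v : Fin n → K) :
    (M.map φ) *ᵥ (fun k => φ (v k)) = fun k => φ ((M *ᵥ v) k) := by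
  ext k
  simp [Matrix.mulVec, dotProduct, map_sum]

lemma vecMulVec_map (φ : K →+* Polynomial K) (u v : Fin n → K) :
    Matrix.vecMulVec (fun k => φ (u k)) (fun k => φ (v k))
      = (Matrix.vecMulVec u v).map φ := by
  ext r c
  simp [Matrix.vecMulVec_apply]

lemma vecMulVec_mul {A : Type*} [CommRing A] {n' : Type*} [Fintype n']
    (u v : n' → A) (M : Matrix n' n' A) :
    Matrix.vecMulVec u v * M = Matrix.vecMulVec u (v ᵥ* M) := by
  ext r c
  simp [Matrix.mul_apply, Matrix.vecMulVec_apply, Matrix.vecMul, dotProduct,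
    Finset.mul_sum, mul_assoc]

lemma smul_vecMulVec {A : Type*} [CommRing A] {n' : Type*}
    (c : A) (u v : n' → A) :
    c • Matrix.vecMulVec u v = Matrix.vecMulVec u (c • v) := by
  ext r s
  simp [Matrix.vecMulVec_apply, Pi.smul_apply, smul_eq_mul]
  ring

lemma neg_vecMulVec {A : Type*} [CommRing A] {n' : Type*} (u v : n' → A) :
    Matrix.vecMulVec u (-v) = -Matrix.vecMulVec u v := by
  ext r s
  simp [Matrix.vecMulVec_apply]


/-- The key vanishing lemma: `j Xᵃ Yᵇ i = 0`. -/
lemma key (X Y : Matrix (Fin n) (Fin n) K) (i j : Fin n → K)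
    (hX : IsNilpotent X) (hY : IsNilpotent Y)
    (hc : X * Y - Y * X + Matrix.vecMulVec i j = 0) :
    ∀ a b : ℕ, j ⬝ᵥ ((X ^ a * Y ^ b) *ᵥ i) = 0 := by
  classical
  obtain ⟨p₀, hp₀⟩ := hX
  obtain ⟨q₀, hq₀⟩ := hY
  set p : ℕ := p₀ + 1 with hpdef
  set q : ℕ := q₀ + 1 with hqdef
  have hp : X ^ p = 0 := by rw [hpdef, pow_succ, hp₀, zero_mul]
  have hq : Y ^ q = 0 := by rw [hqdef, pow_succ, hq₀, zero_mul]
  have hppos : 0 < p := Nat.succ_pos _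
  -- the polynomial ring
  set A := Polynomial K with hA
  set Φ : K →+* A := (Polynomial.C : K →+* A) with hΦ
  set X' : Matrix (Fin n) (Fin n) A := Φ.mapMatrix X with hX'
  set Y' : Matrix (Fin n) (Fin n) A := Φ.mapMatrix Y with hY'
  set i' : Fin n → A := fun k => Φ (i k) with hi'
  set j' : Fin n → A := fun k => Φ (j k) with hj'
  set z : A := Polynomial.X with hz
  set x' : Matrix (Fin n) (Fin n) A := z • X' with hx'
  set y' : Matrix (Fin n) (Fin n) A := (z ^ p) • Y' with hy'
  have hX'p : X' ^ p = 0 := by rw [hX', ← map_pow, hp, map_zero]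
  have hY'q : Y' ^ q = 0 := by rw [hY', ← map_pow, hq, map_zero]
  have hx'p : x' ^ p = 0 := by rw [hx', smul_pow, hX'p, smul_zero]
  have hy'q : y' ^ q = 0 := by rw [hy', smul_pow, hY'q, smul_zero]
  set R : Matrix (Fin n) (Fin n) A := ∑ k ∈ Finset.range p, x' ^ k with hR
  set S : Matrix (Fin n) (Fin n) A := ∑ k ∈ Finset.range q, y' ^ k with hS
  have hUR : (1 - x') * R = 1 := by
    have h1 : (x' - 1) * R = x' ^ p - 1 := mul_geom_sum x' p
    have : (1 - x') * R = -((x' - 1) * R) := by rw [← neg_sub x' 1, neg_mul]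
    rw [this, h1, hx'p, zero_sub, neg_neg]
  have hVS : (1 - y') * S = 1 := by
    have h1 : (y' - 1) * S = y' ^ q - 1 := mul_geom_sum y' q
    have : (1 - y') * S = -((y' - 1) * S) := by rw [← neg_sub y' 1, neg_mul]
    rw [this, h1, hy'q, zero_sub, neg_neg]
  set W' : Matrix (Fin n) (Fin n) A := Matrix.vecMulVec i' j' with hW'
  have hcM : X' * Y' - Y' * X' + W' = 0 := by
    have h2 := congrArg Φ.mapMatrix hc
    rw [map_add, map_sub, _root_.map_mul, _root_.map_mul, map_zero] at h2
    rw [hX', hY', hW', hi', hj', vecMulVec_map]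
    simpa [RingHom.mapMatrix_apply] using h2
  have hcomm : X' * Y' - Y' * X' = -W' := by
    rw [eq_neg_iff_add_eq_zero]; exact hcM
  -- the commutation relation for U := 1 - x' and V := 1 - y'
  have hswap : (1 - x') * (1 - y') = (1 - y') * (1 - x') - (z ^ (p + 1)) • W' := by
    have hxy : x' * y' = (z ^ (p + 1)) • (X' * Y') := by
      rw [hx', hy', smul_mul_assoc, mul_smul_comm, smul_smul]
      congr 1
      ring
    have hyx : y' * x' = (z ^ (p + 1)) • (Y' * X') := by
      rw [hx', hy', smul_mul_assoc, mul_smul_comm, smul_smul, ← pow_succ]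
    have expand : (1 - x') * (1 - y') - (1 - y') * (1 - x') = x' * y' - y' * x' := by
      simp only [sub_mul, mul_sub, one_mul, mul_one]; abel
    have : x' * y' - y' * x' = -((z ^ (p + 1)) • W') := by
      rw [hxy, hyx, ← smul_sub, hcomm, smul_neg]
    linear_combination (norm := abel) expand + this
  set c : A := z ^ (p + 1) with hc'
  set w : Fin n → A := c • (j' ᵥ* (R * S)) with hw
  set M : Matrix (Fin n) (Fin n) A := (1 - x') * (1 - y') * R * S with hM
  have hMeq : M = 1 - Matrix.vecMulVec i' w := by
    have e1 : M = ((1 - y') * (1 - x') - c • W') * (R * S) := by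
      rw [hM, hswap, mul_assoc]
    have e2 : ((1 - y') * (1 - x')) * (R * S) = 1 - 0 := by
      calc ((1 - y') * (1 - x')) * (R * S) = (1 - y') * (((1 - x') * R) * S) := by
            noncomm_ring
        _ = (1 - y') * S := by rw [hUR, one_mul]
        _ = 1 - 0 := by rw [hVS, sub_zero]
    rw [e1, sub_mul, e2, sub_zero, smul_mul_assoc, hW', vecMulVec_mul, smul_vecMulVec, ← hw]
  have hdet1 : M.det = 1 := by
    have e1 : (1 - x').det * R.det = 1 := by rw [← Matrix.det_mul, hUR, Matrix.det_one]
    have e2 : (1 - y').det * S.det = 1 := by rw [← Matrix.det_mul, hVS, Matrix.det_one]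
    calc M.det = (1 - x').det * (1 - y').det * R.det * S.det := by
          rw [hM, Matrix.det_mul, Matrix.det_mul, Matrix.det_mul]
      _ = ((1 - x').det * R.det) * ((1 - y').det * S.det) := by ring
      _ = 1 := by rw [e1, e2, one_mul]
  have hdet2 : M.det = 1 - w ⬝ᵥ i' := by
    rw [hMeq]
    have : (1 : Matrix (Fin n) (Fin n) A) - Matrix.vecMulVec i' w
        = 1 + Matrix.replicateCol (Fin 1) i' * Matrix.replicateRow (Fin 1) (-w) := by
      rw [sub_eq_add_neg, ← neg_vecMulVec]
      exact congrArg _ (Matrix.vecMulVec_eq (ι := Fin 1) i' (-w))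
    rw [this]
    refine (Matrix.det_one_add_replicateCol_mul_replicateRow (ι := Fin 1) i' (-w)).trans ?_
    rw [neg_dotProduct, ← sub_eq_add_neg]
  have hwi : w ⬝ᵥ i' = 0 := by
    have h := hdet1.symm.trans hdet2
    exact sub_eq_self.mp h.symm
  have hcne : c ≠ 0 := by
    rw [hc', hz]; exact pow_ne_zero _ Polynomial.X_ne_zero
  have hg : j' ⬝ᵥ ((R * S) *ᵥ i') = 0 := by
    have h1 : c * ((j' ᵥ* (R * S)) ⬝ᵥ i') = 0 := by
      have h0 := hwi
      rwa [hw, smul_dotProduct, smul_eq_mul] at h0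
    have h2 := (mul_eq_zero.mp h1).resolve_left hcne
    rwa [← dotProduct_mulVec] at h2
  have hRS : R * S = ∑ k ∈ Finset.range p, ∑ l ∈ Finset.range q, x' ^ k * y' ^ l := by
    rw [hR, hS, Finset.sum_mul_sum]
  set F : Matrix (Fin n) (Fin n) A →+ A :=
    { toFun := fun N => j' ⬝ᵥ (N *ᵥ i')
      map_zero' := by simp
      map_add' := fun M N => by simp [Matrix.add_mulVec, dotProduct_add] } with hF
  have hterm : ∀ k l : ℕ, F (x' ^ k * y' ^ l)
      = Polynomial.monomial (k + p * l) (j ⬝ᵥ ((X ^ k * Y ^ l) *ᵥ i)) := by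
    intro k l
    have e1 : x' ^ k * y' ^ l = (z ^ (k + p * l)) • (X' ^ k * Y' ^ l) := by
      rw [hx', hy', smul_pow, smul_pow, smul_mul_assoc, mul_smul_comm, smul_smul,
        ← pow_mul, ← pow_add]
    have e2 : X' ^ k * Y' ^ l = (X ^ k * Y ^ l).map Φ := by
      rw [hX', hY', ← map_pow, ← map_pow, ← _root_.map_mul, RingHom.mapMatrix_apply]
    have e3 : F ((X ^ k * Y ^ l).map Φ) = Φ (j ⬝ᵥ ((X ^ k * Y ^ l) *ᵥ i)) := by
      show j' ⬝ᵥ (((X ^ k * Y ^ l).map Φ) *ᵥ i') = _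
      rw [hi', hj', mulVec_map, dotProduct_map]
    have e4 : F (x' ^ k * y' ^ l) = (z ^ (k + p * l)) * Φ (j ⬝ᵥ ((X ^ k * Y ^ l) *ᵥ i)) := by
      rw [e1, ← e3, ← e2]
      show j' ⬝ᵥ (((z ^ (k + p * l)) • (X' ^ k * Y' ^ l)) *ᵥ i') = _
      rw [Matrix.smul_mulVec, dotProduct_smul, smul_eq_mul]
      rfl
    rw [e4, hz, hΦ, mul_comm, Polynomial.C_mul_X_pow_eq_monomial]
  have hsum : ∑ k ∈ Finset.range p, ∑ l ∈ Finset.range q,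
      Polynomial.monomial (k + p * l) (j ⬝ᵥ ((X ^ k * Y ^ l) *ᵥ i)) = (0 : A) := by
    have h5 : F (R * S) = 0 := hg
    rw [hRS, map_sum] at h5
    rw [← h5]
    apply Finset.sum_congr rfl
    intro k _
    rw [map_sum]
    exact Finset.sum_congr rfl fun l _ => (hterm k l).symm
  -- coefficient extraction
  intro a b
  by_cases hap : p ≤ a
  · have hXa : X ^ a = 0 := by
      rw [← Nat.sub_add_cancel hap, pow_add, hp, mul_zero]
    simp [hXa]
  by_cases hbq : q ≤ b
  · have hYb : Y ^ b = 0 := by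
      rw [← Nat.sub_add_cancel hbq, pow_add, hq, mul_zero]
    simp [hYb]
  push_neg at hap hbq
  have hco := congrArg (fun g => Polynomial.coeff g (a + p * b)) hsum
  simp only [Polynomial.finset_sum_coeff, Polynomial.coeff_monomial,
    Polynomial.coeff_zero] at hco
  have inner : ∀ k ∈ Finset.range p,
      (∑ l ∈ Finset.range q, if k + p * l = a + p * b
        then j ⬝ᵥ ((X ^ k * Y ^ l) *ᵥ i) else 0)
      = if k = a then j ⬝ᵥ ((X ^ a * Y ^ b) *ᵥ i) else 0 := by
    intro k hk
    by_cases hka : k = a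
    · subst hka
      rw [if_pos rfl, Finset.sum_eq_single b]
      · rw [if_pos rfl]
      · intro l _ hlb
        apply if_neg
        intro hEq
        exact hlb (Nat.eq_of_mul_eq_mul_left hppos (Nat.add_left_cancel hEq))
      · intro hb'
        exact absurd (Finset.mem_range.mpr hbq) hb'
    · rw [if_neg hka]
      apply Finset.sum_eq_zero
      intro l _
      apply if_neg
      intro hEq
      apply hka
      have h1 : (k + p * l) % p = k := by
        rw [Nat.add_mul_mod_self_left, Nat.mod_eq_of_lt (Finset.mem_range.mp hk)]
      have h2 : (a + p * b) % p = a := by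
        rw [Nat.add_mul_mod_self_left, Nat.mod_eq_of_lt hap]
      rw [← h1, hEq, h2]
  rw [Finset.sum_congr rfl inner, Finset.sum_ite_eq' (Finset.range p) a,
    if_pos (Finset.mem_range.mpr hap)] at hco
  exact hco


lemma vecMulVec_mulVec' (u v w : Fin n → K) :
    (Matrix.vecMulVec u v) *ᵥ w = (v ⬝ᵥ w) • u := by
  ext r
  simp [Matrix.mulVec, Matrix.vecMulVec_apply, dotProduct, Finset.sum_mul, Finset.mul_sum,
    mul_assoc, mul_comm, mul_left_comm]

section main

variable (X Y : Matrix (Fin n) (Fin n) K) (i j : Fin n → K)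

lemma commute_step
    (hkey : ∀ a b : ℕ, j ⬝ᵥ ((X ^ a * Y ^ b) *ᵥ i) = 0)
    (hc : X * Y - Y * X + Matrix.vecMulVec i j = 0) :
    ∀ c d : ℕ, (Y * (X ^ c * Y ^ d)) *ᵥ i = (X ^ c * Y ^ (d + 1)) *ᵥ i := by
  have hYX : Y * X = X * Y + Matrix.vecMulVec i j := by
    symm
    rw [← sub_eq_zero, ← sub_add_eq_add_sub]
    exact hc
  intro c
  induction c with
  | zero => intro d; rw [pow_zero, one_mul, one_mul, ← pow_succ']
  | succ c ih =>
    intro d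
    calc (Y * (X ^ (c + 1) * Y ^ d)) *ᵥ i
        = ((Y * X) * (X ^ c * Y ^ d)) *ᵥ i := by
          rw [pow_succ' X c, mul_assoc X (X ^ c) (Y ^ d), ← mul_assoc Y X _]
      _ = ((X * Y) * (X ^ c * Y ^ d)) *ᵥ i := by
          have hzero : ((Matrix.vecMulVec i j) * (X ^ c * Y ^ d)) *ᵥ i = 0 := by
            rw [← Matrix.mulVec_mulVec, vecMulVec_mulVec', hkey, zero_smul]
          rw [hYX, add_mul, Matrix.add_mulVec, hzero, add_zero]
      _ = X *ᵥ ((Y * (X ^ c * Y ^ d)) *ᵥ i) := by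
          rw [Matrix.mulVec_mulVec, mul_assoc]
      _ = X *ᵥ ((X ^ c * Y ^ (d + 1)) *ᵥ i) := by rw [ih d]
      _ = (X ^ (c + 1) * Y ^ (d + 1)) *ᵥ i := by
          rw [Matrix.mulVec_mulVec, ← mul_assoc, ← pow_succ']

lemma ordX {a b c d : ℕ} (h : lexdegLt (a, b) (c, d)) : lexdegLt (a + 1, b) (c + 1, d) := by
  unfold lexdegLt at *; simp only at *; omega

lemma ordY {a b c d : ℕ} (h : lexdegLt (a, b) (c, d)) : lexdegLt (a, b + 1) (c, d + 1) := by
  unfold lexdegLt at *; simp only at *; omega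

def Sp (a b : ℕ) : Submodule K (Fin n → K) :=
  Submodule.span K
    {v : Fin n → K | ∃ c d : ℕ, lexdegLt (a, b) (c, d) ∧ v = (X ^ c * Y ^ d) *ᵥ i}

lemma stepX {a b : ℕ} (h : (X ^ a * Y ^ b) *ᵥ i ∈ Sp X Y i a b) :
    (X ^ (a + 1) * Y ^ b) *ᵥ i ∈ Sp X Y i (a + 1) b := by
  have hx : ∀ c d : ℕ, X.mulVecLin ((X ^ c * Y ^ d) *ᵥ i) = (X ^ (c + 1) * Y ^ d) *ᵥ i := by
    intro c d
    rw [Matrix.mulVecLin_apply, Matrix.mulVec_mulVec, ← mul_assoc, ← pow_succ']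
  have h2 : X.mulVecLin ((X ^ a * Y ^ b) *ᵥ i)
      ∈ Submodule.map X.mulVecLin (Sp X Y i a b) := Submodule.mem_map_of_mem h
  rw [hx] at h2
  have hle : Submodule.map X.mulVecLin (Sp X Y i a b) ≤ Sp X Y i (a + 1) b := by
    rw [Sp, Submodule.map_span]
    refine Submodule.span_le.mpr ?_
    rintro v ⟨w, ⟨c, d, hcd, rfl⟩, rfl⟩
    exact Submodule.subset_span ⟨c + 1, d, ordX hcd, (hx c d)⟩
  exact hle h2

lemma stepY (hkey : ∀ a b : ℕ, j ⬝ᵥ ((X ^ a * Y ^ b) *ᵥ i) = 0)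
    (hc : X * Y - Y * X + Matrix.vecMulVec i j = 0)
    {a b : ℕ} (h : (X ^ a * Y ^ b) *ᵥ i ∈ Sp X Y i a b) :
    (X ^ a * Y ^ (b + 1)) *ᵥ i ∈ Sp X Y i a (b + 1) := by
  have hy : ∀ c d : ℕ, Y.mulVecLin ((X ^ c * Y ^ d) *ᵥ i) = (X ^ c * Y ^ (d + 1)) *ᵥ i := by
    intro c d
    rw [Matrix.mulVecLin_apply, Matrix.mulVec_mulVec, commute_step X Y i j hkey hc c d]
  have h2 : Y.mulVecLin ((X ^ a * Y ^ b) *ᵥ i)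
      ∈ Submodule.map Y.mulVecLin (Sp X Y i a b) := Submodule.mem_map_of_mem h
  rw [hy] at h2
  have hle : Submodule.map Y.mulVecLin (Sp X Y i a b) ≤ Sp X Y i a (b + 1) := by
    rw [Sp, Submodule.map_span]
    refine Submodule.span_le.mpr ?_
    rintro v ⟨w, ⟨c, d, hcd, rfl⟩, rfl⟩
    exact Submodule.subset_span ⟨c, d + 1, ordY hcd, (hy c d)⟩
  exact hle h2

end main

end Stmt10Aux

theorem stmt10 {n : ℕ} {K : Type*} [Field K]
    (X Y : Matrix (Fin n) (Fin n) K) (i j : Fin n → K)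
    (hX : IsNilpotent X) (hY : IsNilpotent Y)
    (hc : X * Y - Y * X + Matrix.vecMulVec i j = 0) :
    ∀ a b a' b' : ℕ, a' ≤ a → b' ≤ b →
      inStaircase X Y i a b → inStaircase X Y i a' b' := by
  intro a b a' b' ha hb hst hmem
  apply hst
  have hkey := Stmt10Aux.key X Y i j hX hY hc
  have h1 : (X ^ a' * Y ^ b) *ᵥ i ∈ Stmt10Aux.Sp X Y i a' b :=
    Nat.le_induction hmem (fun m _ ih => Stmt10Aux.stepY X Y i j hkey hc ih) b hb
  have h2 : (X ^ a * Y ^ b) *ᵥ i ∈ Stmt10Aux.Sp X Y i a b :=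
    Nat.le_induction h1 (fun m _ ih => Stmt10Aux.stepX X Y i ih) a ha
  exact h2
end

section
/- For the specific pairs (X,Y) constructed in normal form — X with entries a_{q−p} in positions (p,q) for 1 ≤ p < q ≤ t+1 in the top block and a regular nilpotent Jordan block in the bottom block, Y with superdiagonal 1's in the top block and entries b_{q−p} in the bottom block, a_1 b_1 ≠ 1 — any matrix G with G·(X,Y,i,j) = (X,Y,i,j) (i.e., GXG^{-1}=X, GYG^{-1}=Y, Gi=i, jG^{-1}=j) satisfies G = I + Z where Z has all entries zero except possibly the (1,n) entry. In particular the isotropy group is one-dimensional. -/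
open Matrix

theorem stmt14 {n : ℕ} {K : Type*} [Field K]
    (t : ℕ) (ht1 : 1 ≤ t) (ht2 : t + 2 ≤ n)
    (a b : ℕ → K) (hab : a 1 * b 1 ≠ 1)
    (X Y : Matrix (Fin n) (Fin n) K)
    (hX : X = Matrix.of fun p q : Fin n =>
      if (p : ℕ) < (q : ℕ) ∧ (q : ℕ) ≤ t then a ((q : ℕ) - (p : ℕ))
      else if t ≤ (p : ℕ) ∧ (q : ℕ) = (p : ℕ) + 1 then 1 else 0)
    (hY : Y = Matrix.of fun p q : Fin n =>
      if (q : ℕ) = (p : ℕ) + 1 ∧ (p : ℕ) < t then 1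
      else if t ≤ (p : ℕ) ∧ (p : ℕ) < (q : ℕ) then b ((q : ℕ) - (p : ℕ)) else 0)
    (i j : Fin n → K)
    (hi : i = fun k : Fin n => if (k : ℕ) + 1 = t then (1 : K) else 0)
    (hj : j = fun k : Fin n => if (k : ℕ) = t then a 1 * b 1 - 1 else (0 : K))
    (G : GL (Fin n) K)
    (hGX : (G : Matrix (Fin n) (Fin n) K) * X = X * (G : Matrix (Fin n) (Fin n) K))
    (hGY : (G : Matrix (Fin n) (Fin n) K) * Y = Y * (G : Matrix (Fin n) (Fin n) K))
    (hGi : (G : Matrix (Fin n) (Fin n) K) *ᵥ i = i)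
    (hGj : j ᵥ* (G : Matrix (Fin n) (Fin n) K) = j) :
    ∀ p q : Fin n, ¬((p : ℕ) = 0 ∧ (q : ℕ) = n - 1) →
      ((G : Matrix (Fin n) (Fin n) K) - 1) p q = 0 := by
  subst hX hY hi hj
  set M : Matrix (Fin n) (Fin n) K := (G : Matrix (Fin n) (Fin n) K) with hM
  set Z : Matrix (Fin n) (Fin n) K := M - 1 with hZdef
  set XM : Matrix (Fin n) (Fin n) K := (Matrix.of fun p q : Fin n =>
      if (p : ℕ) < (q : ℕ) ∧ (q : ℕ) ≤ t then a ((q : ℕ) - (p : ℕ))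
      else if t ≤ (p : ℕ) ∧ (q : ℕ) = (p : ℕ) + 1 then 1 else 0) with hXM
  set YM : Matrix (Fin n) (Fin n) K := (Matrix.of fun p q : Fin n =>
      if (q : ℕ) = (p : ℕ) + 1 ∧ (p : ℕ) < t then 1
      else if t ≤ (p : ℕ) ∧ (p : ℕ) < (q : ℕ) then b ((q : ℕ) - (p : ℕ)) else 0) with hYM
  have hZX : Z * XM = XM * Z := by
    simp only [hZdef, sub_mul, mul_sub, one_mul, mul_one, hGX]
  have hZY : Z * YM = YM * Z := by
    simp only [hZdef, sub_mul, mul_sub, one_mul, mul_one, hGY]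
  have hZi : Z *ᵥ (fun k : Fin n => if (k : ℕ) + 1 = t then (1 : K) else 0) = 0 := by
    simp only [hZdef, Matrix.sub_mulVec, Matrix.one_mulVec, hGi, sub_self]
  have hZj : (fun k : Fin n => if (k : ℕ) = t then a 1 * b 1 - 1 else (0 : K)) ᵥ* Z = 0 := by
    simp only [hZdef, Matrix.vecMul_sub, Matrix.vecMul_one, hGj, sub_self]
  -- Step A : columns with index < t vanish
  have colA : ∀ d : ℕ, ∀ q : Fin n, (q : ℕ) + 1 + d = t → ∀ p : Fin n, Z p q = 0 := by
    intro d
    induction d with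
    | zero =>
      intro q hq p
      have h0 := congrFun hZi p
      simp only [Matrix.mulVec, dotProduct, Pi.zero_apply] at h0
      rw [Fintype.sum_eq_single q] at h0
      · rwa [if_pos (by omega : (q : ℕ) + 1 = t), mul_one] at h0
      · intro m hm
        have hm' : (m : ℕ) ≠ (q : ℕ) := fun h => hm (Fin.ext h)
        rw [if_neg (by omega : ¬((m : ℕ) + 1 = t)), mul_zero]
    | succ d ih =>
      intro q hq p
      have hq1 : (q : ℕ) + 1 < n := by omega
      obtain ⟨q', hq'⟩ : ∃ q' : Fin n, (q' : ℕ) = (q : ℕ) + 1 := ⟨⟨_, hq1⟩, rfl⟩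
      have h1 : (Z * YM) p q' = Z p q := by
        rw [Matrix.mul_apply, Fintype.sum_eq_single q]
        · simp only [hYM, Matrix.of_apply]
          rw [if_pos ⟨by omega, by omega⟩, mul_one]
        · intro m hm
          have hm' : (m : ℕ) ≠ (q : ℕ) := fun h => hm (Fin.ext h)
          simp only [hYM, Matrix.of_apply]
          split_ifs <;> first | (exfalso; omega) | ring
      have h2 : (YM * Z) p q' = 0 := by
        rw [Matrix.mul_apply]
        exact Finset.sum_eq_zero fun m _ => by rw [ih q' (by omega) m, mul_zero]
      rw [← h1, hZY, h2]
  have colLT : ∀ p q : Fin n, (q : ℕ) < t → Z p q = 0 := fun p q h =>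
    colA (t - ((q : ℕ) + 1)) q (by omega) p
  -- Step B : rows with index ≥ t vanish
  have rowB : ∀ d : ℕ, ∀ p : Fin n, (p : ℕ) = t + d → ∀ q : Fin n, Z p q = 0 := by
    intro d
    induction d with
    | zero =>
      intro p hp q
      have h0 := congrFun hZj q
      simp only [Matrix.vecMul, dotProduct, Pi.zero_apply] at h0
      rw [Fintype.sum_eq_single p] at h0
      · rw [if_pos (by omega : (p : ℕ) = t)] at h0
        exact (mul_eq_zero.mp h0).resolve_left (sub_ne_zero_of_ne hab)
      · intro m hm
        have hm' : (m : ℕ) ≠ (p : ℕ) := fun h => hm (Fin.ext h)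
        rw [if_neg (by omega : ¬((m : ℕ) = t)), zero_mul]
    | succ d ih =>
      intro p hp q
      have hp1 : t + d < n := by have := p.isLt; omega
      obtain ⟨p', hp'⟩ : ∃ p' : Fin n, (p' : ℕ) = t + d := ⟨⟨_, hp1⟩, rfl⟩
      have h1 : (XM * Z) p' q = Z p q := by
        rw [Matrix.mul_apply, Fintype.sum_eq_single p]
        · simp only [hXM, Matrix.of_apply]
          rw [if_neg (by omega : ¬((p' : ℕ) < (p : ℕ) ∧ (p : ℕ) ≤ t)),
            if_pos ⟨by omega, by omega⟩, one_mul]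
        · intro m hm
          have hm' : (m : ℕ) ≠ (p : ℕ) := fun h => hm (Fin.ext h)
          simp only [hXM, Matrix.of_apply]
          split_ifs <;> first | (exfalso; omega) | ring
      have h2 : (Z * XM) p' q = 0 := by
        rw [Matrix.mul_apply]
        exact Finset.sum_eq_zero fun m _ => by rw [ih p' (by omega) m, zero_mul]
      rw [← h1, ← hZX, h2]
  have rowGE : ∀ p q : Fin n, t ≤ (p : ℕ) → Z p q = 0 := fun p q h =>
    rowB ((p : ℕ) - t) p (by omega) q
  -- Main induction on columns t + k
  have main : ∀ k : ℕ, (∀ p q : Fin n, 1 ≤ (p : ℕ) → (q : ℕ) = t + k → Z p q = 0) ∧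
      (t + k + 1 < n → ∀ p q : Fin n, (p : ℕ) = 0 → (q : ℕ) = t + k → Z p q = 0) := by
    intro k
    induction k using Nat.strong_induction_on with
    | _ k ih =>
      have part1 : ∀ p q : Fin n, 1 ≤ (p : ℕ) → (q : ℕ) = t + k → Z p q = 0 := by
        intro p q hp hq
        by_cases hpt : t ≤ (p : ℕ)
        · exact rowGE p q hpt
        · push_neg at hpt
          obtain ⟨p', hp'⟩ : ∃ p' : Fin n, (p' : ℕ) = (p : ℕ) - 1 :=
            ⟨⟨_, by have := p.isLt; omega⟩, rfl⟩
          have h1 : (YM * Z) p' q = Z p q := by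
            rw [Matrix.mul_apply, Fintype.sum_eq_single p]
            · simp only [hYM, Matrix.of_apply]
              rw [if_pos ⟨by omega, by omega⟩, one_mul]
            · intro m hm
              have hm' : (m : ℕ) ≠ (p : ℕ) := fun h => hm (Fin.ext h)
              simp only [hYM, Matrix.of_apply]
              split_ifs <;> first | (exfalso; omega) | ring
          have h2 : (Z * YM) p' q = 0 := by
            rw [Matrix.mul_apply]
            refine Finset.sum_eq_zero fun m _ => ?_
            by_cases hm1 : (m : ℕ) < t
            · rw [colLT p' m hm1, zero_mul]
            · by_cases hm2 : (m : ℕ) < (q : ℕ)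
              · have hz : Z p' m = 0 := by
                  by_cases hq1 : 1 ≤ (p' : ℕ)
                  · exact (ih ((m : ℕ) - t) (by omega)).1 p' m hq1 (by omega)
                  · exact (ih ((m : ℕ) - t) (by omega)).2
                      (by have := q.isLt; omega) p' m (by omega) (by omega)
                rw [hz, zero_mul]
              · simp only [hYM, Matrix.of_apply]
                split_ifs <;> first | (exfalso; omega) | ring
          rw [← h1, ← hZY, h2]
      have hall : ∀ p q : Fin n, 1 ≤ (p : ℕ) → t ≤ (q : ℕ) → (q : ℕ) ≤ t + k →
          Z p q = 0 := by
        intro p q hp hq1 hq2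
        rcases eq_or_lt_of_le hq2 with h | h
        · exact part1 p q hp h
        · exact (ih ((q : ℕ) - t) (by omega)).1 p q hp (by omega)
      refine ⟨part1, ?_⟩
      intro hkn p q hp0 hq
      obtain ⟨q1, hq1v⟩ : ∃ x : Fin n, (x : ℕ) = t + k + 1 := ⟨⟨_, hkn⟩, rfl⟩
      obtain ⟨p1, hp1v⟩ : ∃ x : Fin n, (x : ℕ) = 1 := ⟨⟨1, by omega⟩, rfl⟩
      -- step 1 : Z p1 q1 = Z p q * b 1
      have step1 : Z p1 q1 = Z p q * b 1 := by
        have ha1 : (YM * Z) p q1 = Z p1 q1 := by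
          rw [Matrix.mul_apply, Fintype.sum_eq_single p1]
          · simp only [hYM, Matrix.of_apply]
            rw [if_pos ⟨by omega, by omega⟩, one_mul]
          · intro m hm
            have hm' : (m : ℕ) ≠ 1 := fun h => hm (Fin.ext (by omega))
            simp only [hYM, Matrix.of_apply]
            split_ifs <;> first | (exfalso; omega) | ring
        have ha2 : (Z * YM) p q1 = Z p q * b 1 := by
          rw [Matrix.mul_apply, Fintype.sum_eq_single q]
          · simp only [hYM, Matrix.of_apply]
            rw [if_neg (by omega : ¬((q1 : ℕ) = (q : ℕ) + 1 ∧ (q : ℕ) < t)),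
              if_pos ⟨by omega, by omega⟩]
            have e : (q1 : ℕ) - (q : ℕ) = 1 := by omega
            rw [e]
          · intro m hm
            have hm' : (m : ℕ) ≠ t + k := fun h => hm (Fin.ext (by omega))
            by_cases hm1 : (m : ℕ) < t
            · rw [colLT p m hm1, zero_mul]
            · by_cases hm2 : (m : ℕ) < t + k
              · have hz : Z p m = 0 :=
                  (ih ((m : ℕ) - t) (by omega)).2 (by omega) p m hp0 (by omega)
                rw [hz, zero_mul]
              · simp only [hYM, Matrix.of_apply]
                split_ifs <;> first | (exfalso; omega) | ring
        rw [← ha1, ← hZY, ha2]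
      -- step 2 : entries of column q1 in rows ≥ 2 vanish
      have step2 : ∀ m : Fin n, 2 ≤ (m : ℕ) → Z m q1 = 0 := by
        intro m hm2
        by_cases hmt : t ≤ (m : ℕ)
        · exact rowGE m q1 hmt
        · push_neg at hmt
          obtain ⟨m', hm'v⟩ : ∃ x : Fin n, (x : ℕ) = (m : ℕ) - 1 :=
            ⟨⟨_, by have := m.isLt; omega⟩, rfl⟩
          have h1 : (YM * Z) m' q1 = Z m q1 := by
            rw [Matrix.mul_apply, Fintype.sum_eq_single m]
            · simp only [hYM, Matrix.of_apply]
              rw [if_pos ⟨by omega, by omega⟩, one_mul]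
            · intro r hr
              have hr' : (r : ℕ) ≠ (m : ℕ) := fun h => hr (Fin.ext h)
              simp only [hYM, Matrix.of_apply]
              split_ifs <;> first | (exfalso; omega) | ring
          have h2 : (Z * YM) m' q1 = 0 := by
            rw [Matrix.mul_apply]
            refine Finset.sum_eq_zero fun r _ => ?_
            by_cases hr1 : (r : ℕ) < t
            · rw [colLT m' r hr1, zero_mul]
            · by_cases hr2 : (r : ℕ) ≤ t + k
              · rw [hall m' r (by omega) (by omega) hr2, zero_mul]
              · simp only [hYM, Matrix.of_apply]
                split_ifs <;> first | (exfalso; omega) | ring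
          rw [← h1, ← hZY, h2]
      -- step 3 : (Z * XM) p q1 = Z p q
      have step3 : (Z * XM) p q1 = Z p q := by
        rw [Matrix.mul_apply, Fintype.sum_eq_single q]
        · simp only [hXM, Matrix.of_apply]
          rw [if_neg (by omega : ¬((q : ℕ) < (q1 : ℕ) ∧ (q1 : ℕ) ≤ t)),
            if_pos ⟨by omega, by omega⟩, mul_one]
        · intro m hm
          have hm' : (m : ℕ) ≠ t + k := fun h => hm (Fin.ext (by omega))
          simp only [hXM, Matrix.of_apply]
          split_ifs <;> first | (exfalso; omega) | ring
      -- step 4 : (XM * Z) p q1 = a 1 * (Z p q * b 1)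
      have step4 : (XM * Z) p q1 = a 1 * (Z p q * b 1) := by
        rw [Matrix.mul_apply, Fintype.sum_eq_single p1]
        · simp only [hXM, Matrix.of_apply]
          rw [if_pos ⟨by omega, by omega⟩]
          have e : (p1 : ℕ) - (p : ℕ) = 1 := by omega
          rw [e, step1]
        · intro m hm
          have hm' : (m : ℕ) ≠ 1 := fun h => hm (Fin.ext (by omega))
          by_cases hm0 : (m : ℕ) = 0
          · simp only [hXM, Matrix.of_apply]
            split_ifs <;> first | (exfalso; omega) | ring
          · rw [step2 m (by omega), mul_zero]
      have key : Z p q = a 1 * (Z p q * b 1) := by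
        conv_lhs => rw [← step3, hZX]
        exact step4
      have key2 : Z p q * (a 1 * b 1 - 1) = 0 := by linear_combination -key
      exact (mul_eq_zero.mp key2).resolve_right (sub_ne_zero_of_ne hab)
  -- Conclusion
  intro p q hpq
  by_cases hq : (q : ℕ) < t
  · exact colLT p q hq
  · by_cases hp : t ≤ (p : ℕ)
    · exact rowGE p q hp
    · push_neg at hq hp
      by_cases hp1 : 1 ≤ (p : ℕ)
      · exact (main ((q : ℕ) - t)).1 p q hp1 (by omega)
      · have hqn : (q : ℕ) ≠ n - 1 := fun h => hpq ⟨by omega, h⟩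
        have hq2 : (q : ℕ) + 1 < n := by have := q.isLt; omega
        exact (main ((q : ℕ) - t)).2 (by omega) p q (by omega) (by omega)
end

section
/- Let L be the regular nilpotent Jordan block of size n, i_r = e_r, j_r = e_{r+1}^*. Then the quadruple (L, i_r j_r − L, i_r, j_r) satisfies: both L and i_r j_r − L are nilpotent, dim K[L]i_r = r, and dim j_r K[L] = n − r. -/
open Matrix

private lemma nil_superdiag {n : ℕ} {K : Type*} [Field K]
    (M : Matrix (Fin n) (Fin n) K)
    (h : ∀ p q, M p q ≠ 0 → (q : ℕ) = (p : ℕ) + 1) : IsNilpotent M := by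
  refine ⟨n, ?_⟩
  have key : ∀ k (p q : Fin n), (M ^ k) p q ≠ 0 → (p : ℕ) + k ≤ (q : ℕ) := by
    intro k
    induction k with
    | zero =>
      intro p q hpq
      rcases eq_or_ne p q with rfl | hne
      · simp
      · exact absurd (by simp [Matrix.one_apply_ne hne]) hpq
    | succ k ih =>
      intro p q hpq
      rw [pow_succ, Matrix.mul_apply] at hpq
      obtain ⟨t, -, ht⟩ := Finset.exists_ne_zero_of_sum_ne_zero hpq
      have h1 := ih p t (left_ne_zero_of_mul ht)
      have h2 := h t q (right_ne_zero_of_mul ht)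
      omega
  ext p q
  by_contra hc
  have := key n p q hc
  have := q.isLt
  omega

private lemma span_single_finrank {n : ℕ} {K : Type*} [Field K]
    (P : Fin n → Prop) [DecidablePred P] :
    Module.finrank K (Submodule.span K
      ((fun m : Fin n => Pi.single m (1 : K)) '' {m | P m})) =
      Fintype.card {m : Fin n // P m} := by
  rw [show ((fun m : Fin n => Pi.single m (1 : K)) '' {m | P m}) =
      Set.range (fun m : {m : Fin n // P m} => Pi.single (m : Fin n) (1 : K)) from
    Set.image_eq_range _ _]
  refine finrank_span_eq_card ?_
  have hb : LinearIndependent K (fun m : Fin n => Pi.single m (1 : K)) := by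
    have h := (Pi.basisFun K (Fin n)).linearIndependent
    have he : ⇑(Pi.basisFun K (Fin n)) = fun m : Fin n => Pi.single m (1 : K) := by
      funext m; simp
    rwa [he] at h
  exact hb.comp Subtype.val Subtype.val_injective

theorem stmt15 {n : ℕ} {K : Type*} [Field K]
    (hn : 1 ≤ n) (r : ℕ) (hr : r ≤ n - 1)
    (L : Matrix (Fin n) (Fin n) K)
    (hL : L = Matrix.of fun p q : Fin n => if (q : ℕ) = (p : ℕ) + 1 then 1 else 0)
    (i j : Fin n → K)
    (hi : i = fun k : Fin n => if (k : ℕ) + 1 = r then (1 : K) else 0)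
    (hj : j = fun k : Fin n => if (k : ℕ) = r then (1 : K) else 0) :
    IsNilpotent L ∧ IsNilpotent (Matrix.vecMulVec i j - L) ∧
    Module.finrank K (Submodule.span K (Set.range fun k : ℕ => (L ^ k) *ᵥ i)) = r ∧
    Module.finrank K (Submodule.span K (Set.range fun k : ℕ => j ᵥ* (L ^ k))) = n - r := by
  have hrn : r < n := by omega
  -- shift lemmas
  have hLmul : ∀ (v : Fin n → K) (p : Fin n),
      (L *ᵥ v) p = if h : (p : ℕ) + 1 < n then v ⟨(p : ℕ) + 1, h⟩ else 0 := by
    intro v p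
    simp only [hL, Matrix.mulVec, dotProduct, Matrix.of_apply]
    split
    · next h =>
      rw [Finset.sum_eq_single (⟨(p : ℕ) + 1, h⟩ : Fin n)]
      · simp
      · intro q _ hq
        rw [if_neg (fun hc => hq (Fin.ext hc)), zero_mul]
      · simp
    · next h =>
      refine Finset.sum_eq_zero fun q _ => ?_
      have := q.isLt
      rw [if_neg (by omega), zero_mul]
  have hvecMul : ∀ (v : Fin n → K) (q : Fin n),
      (v ᵥ* L) q = if h : 1 ≤ (q : ℕ) then
        v ⟨(q : ℕ) - 1, Nat.lt_of_le_of_lt (Nat.sub_le _ _) q.isLt⟩ else 0 := by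
    intro v q
    simp only [hL, Matrix.vecMul, dotProduct, Matrix.of_apply]
    split
    · next h =>
      rw [Finset.sum_eq_single (⟨(q : ℕ) - 1, Nat.lt_of_le_of_lt (Nat.sub_le _ _) q.isLt⟩ : Fin n)]
      · rw [if_pos (show (q : ℕ) = (q : ℕ) - 1 + 1 by omega), mul_one]
      · intro p _ hp
        rw [if_neg (fun hc => hp (Fin.ext (show (p : ℕ) = (q : ℕ) - 1 by omega))), mul_zero]
      · simp
    · next h =>
      refine Finset.sum_eq_zero fun p _ => ?_
      rw [if_neg (by omega), mul_zero]
  -- explicit formulas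
  have hf : ∀ k (p : Fin n), ((L ^ k) *ᵥ i) p = if (p : ℕ) + k + 1 = r then 1 else 0 := by
    intro k
    induction k with
    | zero => intro p; simp [hi]
    | succ k ih =>
      intro p
      rw [pow_succ', ← Matrix.mulVec_mulVec, hLmul]
      split
      · next h =>
        rw [ih]
        simp only [Fin.val_mk]
        rw [show (p : ℕ) + 1 + k + 1 = (p : ℕ) + (k + 1) + 1 by omega]
      · next h =>
        rw [if_neg (by omega)]
  have hg : ∀ k (q : Fin n), (j ᵥ* (L ^ k)) q = if (q : ℕ) = r + k then 1 else 0 := by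
    intro k
    induction k with
    | zero => intro q; simp [hj]
    | succ k ih =>
      intro q
      rw [pow_succ, ← Matrix.vecMul_vecMul, hvecMul]
      split
      · next h =>
        rw [ih]
        simp only [Fin.val_mk]
        by_cases hc : (q : ℕ) = r + (k + 1)
        · rw [if_pos (by omega), if_pos hc]
        · rw [if_neg (by omega), if_neg hc]
      · next h =>
        rw [if_neg (by omega)]
  refine ⟨?_, ?_, ?_, ?_⟩
  · -- L nilpotent
    refine nil_superdiag _ fun p q hpq => ?_
    by_contra hc
    exact hpq (by simp [hL, hc])
  · -- i jᵀ - L nilpotent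
    refine nil_superdiag _ fun p q hpq => ?_
    by_contra hc
    apply hpq
    simp only [Matrix.sub_apply, Matrix.vecMulVec_apply, hL, hi, hj, Matrix.of_apply]
    rw [if_neg hc]
    split_ifs <;> first | (exfalso; omega) | simp
  · -- finrank r
    have hrange : (Set.range fun k : ℕ => (L ^ k) *ᵥ i) =
        insert 0 ((fun m : Fin n => Pi.single m (1 : K)) '' {m | (m : ℕ) < r}) := by
      ext v
      rw [Set.mem_insert_iff]
      constructor
      · rintro ⟨k, rfl⟩
        by_cases hk : k + 1 ≤ r
        · right
          refine ⟨⟨r - k - 1, by omega⟩, by simp; omega, ?_⟩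
          funext p
          simp only [hf, Pi.single_apply, Fin.ext_iff, Fin.val_mk]
          split_ifs <;> first | rfl | (exfalso; omega)
        · left
          funext p
          simp only [hf, Pi.zero_apply]
          rw [if_neg (by omega)]
      · rintro (rfl | ⟨m, hm, rfl⟩)
        · refine ⟨r, funext fun p => ?_⟩
          simp only [hf, Pi.zero_apply]
          rw [if_neg (by omega)]
        · refine ⟨r - 1 - (m : ℕ), funext fun p => ?_⟩
          have hm' : (m : ℕ) < r := hm
          simp only [hf, Pi.single_apply, Fin.ext_iff]
          split_ifs <;> first | rfl | (exfalso; omega)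
    rw [hrange, Submodule.span_insert_zero, span_single_finrank]
    rw [Fintype.card_congr
      (⟨fun m => ⟨m.1, m.2⟩, fun a => ⟨⟨a, lt_of_lt_of_le a.isLt (by omega)⟩, a.isLt⟩,
        fun m => rfl, fun a => rfl⟩ : {m : Fin n // (m : ℕ) < r} ≃ Fin r)]
    exact Fintype.card_fin r
  · -- finrank n - r
    have hrange : (Set.range fun k : ℕ => j ᵥ* (L ^ k)) =
        insert 0 ((fun m : Fin n => Pi.single m (1 : K)) '' {m | r ≤ (m : ℕ)}) := by
      ext v
      rw [Set.mem_insert_iff]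
      constructor
      · rintro ⟨k, rfl⟩
        by_cases hk : r + k < n
        · right
          refine ⟨⟨r + k, hk⟩, by simp, ?_⟩
          funext q
          simp only [hg, Pi.single_apply, Fin.ext_iff, Fin.val_mk]
        · left
          funext q
          have := q.isLt
          simp only [hg, Pi.zero_apply]
          rw [if_neg (by omega)]
      · rintro (rfl | ⟨m, hm, rfl⟩)
        · refine ⟨n, funext fun q => ?_⟩
          have := q.isLt
          simp only [hg, Pi.zero_apply]
          rw [if_neg (by omega)]
        · refine ⟨(m : ℕ) - r, funext fun q => ?_⟩
          have hm' : r ≤ (m : ℕ) := hm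
          simp only [hg, Pi.single_apply, Fin.ext_iff]
          split_ifs <;> first | rfl | (exfalso; omega)
    rw [hrange, Submodule.span_insert_zero, span_single_finrank]
    rw [Fintype.card_congr
      (⟨fun m => ⟨m.1.1 - r, by have := m.1.isLt; have := m.2; omega⟩,
        fun a => ⟨⟨a.1 + r, by have := a.isLt; omega⟩, Nat.le_add_left r a.1⟩,
        fun m => Subtype.ext (Fin.ext (Nat.sub_add_cancel m.2)),
        fun a => Fin.ext (by simp)⟩ :
        {m : Fin n // r ≤ (m : ℕ)} ≃ Fin (n - r))]
    exact Fintype.card_fin (n - r)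
end

section
/- The variety S_{r,n−r} = {(A,B,i,j) : A, B nilpotent, A+B = ij, dim K[A]i ≤ r, dim jK[A] ≤ n−r} contains the point (L, i_r j_r − L, i_r, j_r), and this point does NOT lie in S_{r', n−r'} for any r' ≠ r. Hence the closed sets S_{r,n−r}, 0 ≤ r ≤ n−1, are pairwise non-redundant (none is contained in the union of the others). -/
open Matrix

section Aux
variable {n : ℕ} {K : Type*} [Field K]

lemma aux_sum_ite (c : ℕ) (w : Fin n → K) :
    (∑ q : Fin n, if (q : ℕ) = c then w q else 0) = if h : c < n then w ⟨c, h⟩ else 0 := by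
  split
  · next h =>
    rw [Finset.sum_eq_single (⟨c, h⟩ : Fin n)]
    · simp
    · intro b _ hb
      rw [if_neg]
      simpa [Fin.ext_iff] using hb
    · simp
  · next h =>
    apply Finset.sum_eq_zero
    intro q _
    rw [if_neg]
    omega

lemma aux_nilpotent (M : Matrix (Fin n) (Fin n) K)
    (h : ∀ p q : Fin n, (q : ℕ) ≤ (p : ℕ) → M p q = 0) : IsNilpotent M := by
  have key : ∀ k : ℕ, ∀ p q : Fin n, (q : ℕ) < k + (p : ℕ) → (M ^ k) p q = 0 := by
    intro k
    induction k with
    | zero =>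
      intro p q hq
      have hpq : p ≠ q := fun h => by subst h; omega
      simp [Matrix.one_apply, hpq]
    | succ k ih =>
      intro p q hq
      rw [pow_succ', Matrix.mul_apply]
      apply Finset.sum_eq_zero
      intro m _
      by_cases hm : (m : ℕ) ≤ (p : ℕ)
      · rw [h p m hm, zero_mul]
      · rw [ih m q (by omega), mul_zero]
  exact ⟨n, by ext p q; exact key n p q (by omega)⟩

lemma aux_finrank (m : ℕ) (f : Fin m → Fin n) (hf : Function.Injective f) :
    Module.finrank K (Submodule.span K (Set.range fun t : Fin m => (Pi.single (f t) 1 : Fin n → K))) = m := by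
  have li : LinearIndependent K fun t : Fin m => (Pi.single (f t) 1 : Fin n → K) := by
    have := (Pi.basisFun K (Fin n)).linearIndependent.comp f hf
    simpa [Function.comp_def] using this
  rw [finrank_span_eq_card li, Fintype.card_fin]

end Aux

theorem stmt17 {n : ℕ} {K : Type*} [Field K]
    (hn : 2 ≤ n) (r : ℕ) (hr : r ≤ n - 1)
    (L : Matrix (Fin n) (Fin n) K)
    (hL : L = Matrix.of fun p q : Fin n => if (q : ℕ) = (p : ℕ) + 1 then 1 else 0)
    (i j : Fin n → K)
    (hi : i = fun k : Fin n => if (k : ℕ) + 1 = r then (1 : K) else 0)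
    (hj : j = fun k : Fin n => if (k : ℕ) = r then (1 : K) else 0) :
    (IsNilpotent L ∧ IsNilpotent (Matrix.vecMulVec i j - L) ∧
      Module.finrank K (Submodule.span K (Set.range fun k : ℕ => (L ^ k) *ᵥ i)) ≤ r ∧
      Module.finrank K (Submodule.span K (Set.range fun k : ℕ => j ᵥ* (L ^ k))) ≤ n - r) ∧
    ∀ r' : ℕ, r' ≤ n - 1 → r' ≠ r →
      ¬(Module.finrank K (Submodule.span K (Set.range fun k : ℕ => (L ^ k) *ᵥ i)) ≤ r' ∧
        Module.finrank K (Submodule.span K (Set.range fun k : ℕ => j ᵥ* (L ^ k))) ≤ n - r') := by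
  -- key computation: columns
  have key1 : ∀ k : ℕ, (L ^ k) *ᵥ i = fun p : Fin n => if (p : ℕ) + 1 + k = r then (1 : K) else 0 := by
    intro k
    induction k with
    | zero => funext p; simp [hi]
    | succ k ih =>
      rw [pow_succ', ← Matrix.mulVec_mulVec, ih]
      funext p
      have : (Matrix.of fun p q : Fin n => if (q : ℕ) = (p : ℕ) + 1 then (1:K) else 0) *ᵥ
          (fun p : Fin n => if (p : ℕ) + 1 + k = r then (1 : K) else 0) =
          fun p : Fin n => if (p : ℕ) + 1 + (k+1) = r then (1 : K) else 0 := by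
        funext p
        show (∑ q : Fin n, _) = _
        simp only [Matrix.of_apply]
        rw [show (∑ q : Fin n, (if (q : ℕ) = (p : ℕ) + 1 then (1:K) else 0) *
            (if (q : ℕ) + 1 + k = r then (1 : K) else 0)) =
            ∑ q : Fin n, (if (q : ℕ) = (p : ℕ) + 1 then
              (if (q : ℕ) + 1 + k = r then (1 : K) else 0) else 0) from
          Finset.sum_congr rfl fun q _ => by split_ifs <;> simp,
          aux_sum_ite]
        split
        · next h =>
            rw [show (((⟨(p : ℕ) + 1, h⟩ : Fin n)) : ℕ) = (p : ℕ) + 1 from rfl]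
            split_ifs <;> first | rfl | omega
        · next h => rw [if_neg (by omega)]
      rw [hL, this]
  -- key computation: rows
  have key2 : ∀ k : ℕ, j ᵥ* (L ^ k) = fun q : Fin n => if (q : ℕ) = r + k then (1 : K) else 0 := by
    intro k
    induction k with
    | zero => funext q; simp [hj]
    | succ k ih =>
      rw [pow_succ, ← Matrix.vecMul_vecMul, ih, hL]
      funext q
      show (∑ p : Fin n, _) = _
      simp only [Matrix.of_apply]
      rw [show (∑ p : Fin n, (if (p : ℕ) = r + k then (1:K) else 0) *
          (if (q : ℕ) = (p : ℕ) + 1 then (1 : K) else 0)) =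
          ∑ p : Fin n, (if (p : ℕ) = r + k then
            (if (q : ℕ) = (p : ℕ) + 1 then (1 : K) else 0) else 0) from
        Finset.sum_congr rfl fun p _ => by split_ifs <;> simp,
        aux_sum_ite]
      split
      · next h =>
          rw [show (((⟨r + k, h⟩ : Fin n)) : ℕ) = r + k from rfl]
          split_ifs <;> first | rfl | omega
      · next h => rw [if_neg (by omega)]
  -- span equalities
  have hspan1 : Submodule.span K (Set.range fun k : ℕ => (L ^ k) *ᵥ i) =
      Submodule.span K (Set.range fun t : Fin r =>
        (Pi.single (⟨(t : ℕ), by omega⟩ : Fin n) 1 : Fin n → K)) := by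
    apply le_antisymm <;> rw [Submodule.span_le]
    · rintro _ ⟨k, rfl⟩
      simp only [key1]
      by_cases hk : k < r
      · apply Submodule.subset_span
        refine ⟨⟨r - 1 - k, by omega⟩, ?_⟩
        funext p
        simp only [Pi.single_apply]
        simp only [Fin.ext_iff]
        split_ifs <;> first | rfl | omega
      · have h0 : (fun p : Fin n => if (p : ℕ) + 1 + k = r then (1:K) else 0) = 0 := by
          funext p; rw [if_neg (by omega)]; rfl
        rw [h0]; exact Submodule.zero_mem _
    · rintro _ ⟨t, rfl⟩
      apply Submodule.subset_span
      refine ⟨r - 1 - (t : ℕ), ?_⟩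
      simp only [key1]
      funext p
      simp only [Pi.single_apply]
      simp only [Fin.ext_iff]
      have := t.2
      split_ifs <;> first | rfl | omega
  have hspan2 : Submodule.span K (Set.range fun k : ℕ => j ᵥ* (L ^ k)) =
      Submodule.span K (Set.range fun t : Fin (n - r) =>
        (Pi.single (⟨r + (t : ℕ), by omega⟩ : Fin n) 1 : Fin n → K)) := by
    apply le_antisymm <;> rw [Submodule.span_le]
    · rintro _ ⟨k, rfl⟩
      simp only [key2]
      by_cases hk : k < n - r
      · apply Submodule.subset_span
        refine ⟨⟨k, hk⟩, ?_⟩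
        funext q
        simp only [Pi.single_apply]
        simp only [Fin.ext_iff]
      · have h0 : (fun q : Fin n => if (q : ℕ) = r + k then (1:K) else 0) = 0 := by
          funext q; rw [if_neg (by omega)]; rfl
        rw [h0]; exact Submodule.zero_mem _
    · rintro _ ⟨t, rfl⟩
      apply Submodule.subset_span
      refine ⟨(t : ℕ), ?_⟩
      simp only [key2]
      funext q
      simp only [Pi.single_apply]
      simp only [Fin.ext_iff]
  have e1 : Module.finrank K (Submodule.span K (Set.range fun k : ℕ => (L ^ k) *ᵥ i)) = r := by
    rw [hspan1]
    exact aux_finrank r _ (fun a b h => Fin.ext (by simpa [Fin.ext_iff] using h))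
  have e2 : Module.finrank K (Submodule.span K (Set.range fun k : ℕ => j ᵥ* (L ^ k))) = n - r := by
    rw [hspan2]
    exact aux_finrank (n - r) _ (fun a b h => Fin.ext (by simpa [Fin.ext_iff] using h))
  refine ⟨⟨?_, ?_, e1.le, e2.le⟩, ?_⟩
  · apply aux_nilpotent
    intro p q hpq
    rw [hL]
    exact if_neg (by omega)
  · apply aux_nilpotent
    intro p q hpq
    rw [hL, hi, hj]
    simp only [Matrix.sub_apply, Matrix.vecMulVec_apply, Matrix.of_apply]
    split_ifs <;> (try omega) <;> simp
  · intro r' h1 h2 ⟨a, b⟩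
    rw [e1] at a
    rw [e2] at b
    omega
end

section
/- If X, Y are nilpotent n×n matrices with [X,Y] + ij = 0 and r = dim K⟨X,Y⟩i, s = dim jK⟨X,Y⟩, then r + s ≤ n; moreover if r > 0 and s > 0 then r + s ≤ n − 1. -/
open Matrix

namespace Stmt18Aux

variable {K : Type*} [Field K]

lemma exists_ker_ne_zero {V : Type*} [AddCommGroup V] [Module K V] [Nontrivial V]
    (f : Module.End K V) (hf : IsNilpotent f) : ∃ v : V, v ≠ 0 ∧ f v = 0 := by
  obtain ⟨k, hk⟩ := hf
  by_contra h
  push_neg at h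
  have hinj : Function.Injective f := by
    rw [← LinearMap.ker_eq_bot, LinearMap.ker_eq_bot']
    intro m hm
    by_contra hm0
    exact h m hm0 hm
  have hpow : ∀ m : ℕ, Function.Injective (f ^ m : Module.End K V) := by
    intro m
    induction m with
    | zero => simpa [Module.End.one_eq_id] using Function.injective_id
    | succ t ih =>
      rw [pow_succ]
      exact ih.comp hinj
  obtain ⟨x, y, hxy⟩ := exists_pair_ne V
  apply hxy
  have : (f ^ k) x = (f ^ k) y := by rw [hk]; simp
  exact hpow k this

lemma exists_common_ker {V : Type*} [AddCommGroup V] [Module K V] [Nontrivial V]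
    (f g : Module.End K V) (hf : IsNilpotent f) (hg : IsNilpotent g)
    (hcomm : ∀ v, f (g v) = g (f v)) :
    ∃ v : V, v ≠ 0 ∧ f v = 0 ∧ g v = 0 := by
  obtain ⟨v1, hv1, hfv1⟩ := exists_ker_ne_zero f hf
  have hmap : ∀ x ∈ LinearMap.ker f, g x ∈ LinearMap.ker f := by
    intro x hx
    rw [LinearMap.mem_ker] at hx ⊢
    rw [hcomm, hx, map_zero]
  haveI : Nontrivial (LinearMap.ker f) := by
    refine Submodule.nontrivial_iff_ne_bot.mpr ?_
    intro hbot
    rw [LinearMap.ker_eq_bot'] at hbot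
    exact hv1 (hbot v1 hfv1)
  have hgr : IsNilpotent (g.restrict hmap) := by
    obtain ⟨k, hk⟩ := hg
    refine ⟨k, ?_⟩
    ext ⟨x, hx⟩
    have := Module.End.pow_restrict k hmap
    rw [this]
    simp [LinearMap.restrict_apply, hk]
  obtain ⟨w, hw0, hwk⟩ := exists_ker_ne_zero (g.restrict hmap) hgr
  refine ⟨(w : V), ?_, w.2, ?_⟩
  · simpa using hw0
  · have : ((g.restrict hmap) w : V) = g (w : V) := rfl
    rw [hwk] at this
    exact this.symm

end Stmt18Aux

namespace Stmt18Aux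

variable {K : Type*} [Field K]
variable {V : Type*} [AddCommGroup V] [Module K V]

lemma smul_of_adjoin (f g : Module.End K V) (v : V) (hfv : f v = 0) (hgv : g v = 0) :
    ∀ a ∈ Algebra.adjoin K ({f, g} : Set (Module.End K V)), ∃ c : K, a v = c • v := by
  intro a ha
  induction ha using Algebra.adjoin_induction with
  | mem x hx =>
    rcases hx with h | h
    · exact ⟨0, by rw [h, hfv, zero_smul]⟩
    · rw [Set.mem_singleton_iff] at h
      exact ⟨0, by rw [h, hgv, zero_smul]⟩
  | algebraMap r => exact ⟨r, by simp [Module.algebraMap_end_apply]⟩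
  | add x y hx hy ihx ihy =>
    obtain ⟨c, hc⟩ := ihx; obtain ⟨d, hd⟩ := ihy
    exact ⟨c + d, by simp [LinearMap.add_apply, hc, hd, add_smul]⟩
  | mul x y hx hy ihx ihy =>
    obtain ⟨c, hc⟩ := ihx; obtain ⟨d, hd⟩ := ihy
    refine ⟨c * d, ?_⟩
    rw [Module.End.mul_apply, hd, LinearMap.map_smul, hc, smul_smul, mul_comm]

lemma beta [FiniteDimensional K V] [Nontrivial V] (f g : Module.End K V) (i : V)
    (j : V →ₗ[K] K) (hf : IsNilpotent f) (hg : IsNilpotent g)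
    (hrel : ∀ v, f (g v) - g (f v) + j v • i = 0)
    (hW : ∀ v : V, (∀ a ∈ Algebra.adjoin K ({f, g} : Set (Module.End K V)), j (a v) = 0) → v = 0) :
    ∃ v, f v = 0 ∧ j v ≠ 0 := by
  by_contra hcon
  push_neg at hcon
  obtain ⟨v1, hv1, hfv1⟩ := exists_ker_ne_zero f hf
  have hmap : ∀ x ∈ LinearMap.ker f, g x ∈ LinearMap.ker f := by
    intro x hx
    rw [LinearMap.mem_ker] at hx ⊢
    have h1 := hrel x
    rw [hx, map_zero, hcon x hx, zero_smul, add_zero, sub_zero] at h1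
    exact h1
  haveI : Nontrivial (LinearMap.ker f) := by
    refine Submodule.nontrivial_iff_ne_bot.mpr ?_
    intro hbot
    rw [LinearMap.ker_eq_bot'] at hbot
    exact hv1 (hbot v1 hfv1)
  have hgr : IsNilpotent (g.restrict hmap) := by
    obtain ⟨k, hk⟩ := hg
    refine ⟨k, ?_⟩
    ext ⟨x, hx⟩
    rw [Module.End.pow_restrict k hmap]
    simp [LinearMap.restrict_apply, hk]
  obtain ⟨w, hw0, hwk⟩ := exists_ker_ne_zero (g.restrict hmap) hgr
  have hgw : g (w : V) = 0 := by
    have : ((g.restrict hmap) w : V) = g (w : V) := rfl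
    rw [hwk] at this; exact this.symm
  have hfw : f (w : V) = 0 := w.2
  have : (w : V) = 0 := by
    apply hW
    intro a ha
    obtain ⟨c, hc⟩ := smul_of_adjoin f g (w : V) hfw hgw a ha
    rw [hc, LinearMap.map_smul, hcon (w:V) hfw, smul_zero]
  exact hw0 (by simpa using this)

end Stmt18Aux

namespace Stmt18Aux

variable {K : Type*} [Field K]
variable {V : Type*} [AddCommGroup V] [Module K V]

lemma isNilpotent_restrict (f : Module.End K V) (hf : IsNilpotent f)
    {W : Submodule K V} (hmap : ∀ x ∈ W, f x ∈ W) : IsNilpotent (f.restrict hmap) := by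
  obtain ⟨k, hk⟩ := hf
  refine ⟨k, ?_⟩
  ext ⟨x, hx⟩
  rw [Module.End.pow_restrict k hmap]
  simp [LinearMap.restrict_apply, hk]

lemma adjoin_restrict (f g : Module.End K V) {W : Submodule K V}
    (hfW : ∀ x ∈ W, f x ∈ W) (hgW : ∀ x ∈ W, g x ∈ W) :
    ∀ a ∈ Algebra.adjoin K ({f, g} : Set (Module.End K V)),
      ∃ a' ∈ Algebra.adjoin K
        ({f.restrict hfW, g.restrict hgW} : Set (Module.End K W)),
        ∀ w : W, a (w : V) = ((a' w : W) : V) := by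
  intro a ha
  induction ha using Algebra.adjoin_induction with
  | mem x hx =>
    rcases hx with h | h
    · rw [h]
      exact ⟨f.restrict hfW, Algebra.subset_adjoin (Set.mem_insert _ _),
        fun w => rfl⟩
    · rw [Set.mem_singleton_iff] at h
      rw [h]
      exact ⟨g.restrict hgW,
        Algebra.subset_adjoin (Set.mem_insert_iff.mpr (Or.inr rfl)), fun w => rfl⟩
  | algebraMap r =>
    refine ⟨algebraMap K _ r, algebraMap_mem _ r, fun w => ?_⟩
    simp [Module.algebraMap_end_apply]
  | add x y hx hy ihx ihy =>
    obtain ⟨x', hx', ex⟩ := ihx; obtain ⟨y', hy', ey⟩ := ihy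
    refine ⟨x' + y', add_mem hx' hy', fun w => ?_⟩
    simp [LinearMap.add_apply, ex w, ey w]
  | mul x y hx hy ihx ihy =>
    obtain ⟨x', hx', ex⟩ := ihx; obtain ⟨y', hy', ey⟩ := ihy
    refine ⟨x' * y', mul_mem hx' hy', fun w => ?_⟩
    rw [Module.End.mul_apply, Module.End.mul_apply, ey w, ex (y' w)]

lemma adjoin_mapQ (f g : Module.End K V) {W : Submodule K V}
    (hfW : W ≤ W.comap f) (hgW : W ≤ W.comap g) :
    ∀ a ∈ Algebra.adjoin K ({f, g} : Set (Module.End K V)),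
      ∃ a' ∈ Algebra.adjoin K
        ({W.mapQ W f hfW, W.mapQ W g hgW} : Set (Module.End K (V ⧸ W))),
        ∀ v : V, a' (W.mkQ v) = W.mkQ (a v) := by
  intro a ha
  induction ha using Algebra.adjoin_induction with
  | mem x hx =>
    rcases hx with h | h
    · rw [h]
      refine ⟨W.mapQ W f hfW, Algebra.subset_adjoin (Set.mem_insert _ _), fun v => ?_⟩
      simp [Submodule.mapQ_apply, Submodule.mkQ_apply]
    · rw [Set.mem_singleton_iff] at h
      rw [h]
      refine ⟨W.mapQ W g hgW,
        Algebra.subset_adjoin (Set.mem_insert_iff.mpr (Or.inr rfl)), fun v => ?_⟩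
      simp [Submodule.mapQ_apply, Submodule.mkQ_apply]
  | algebraMap r =>
    refine ⟨algebraMap K _ r, algebraMap_mem _ r, fun v => ?_⟩
    simp [Module.algebraMap_end_apply]
  | add x y hx hy ihx ihy =>
    obtain ⟨x', hx', ex⟩ := ihx; obtain ⟨y', hy', ey⟩ := ihy
    refine ⟨x' + y', add_mem hx' hy', fun v => ?_⟩
    rw [LinearMap.add_apply, LinearMap.add_apply, ex v, ey v, map_add]
  | mul x y hx hy ihx ihy =>
    obtain ⟨x', hx', ex⟩ := ihx; obtain ⟨y', hy', ey⟩ := ihy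
    refine ⟨x' * y', mul_mem hx' hy', fun v => ?_⟩
    rw [Module.End.mul_apply, Module.End.mul_apply, ey v, ex (y v)]

lemma dualMap_pow (f : Module.End K V) (k : ℕ) :
    ((f.dualMap : Module.End K (Module.Dual K V)))^k = (f^k).dualMap := by
  induction k with
  | zero =>
    ext φ v
    simp
  | succ t ih =>
    ext φ v
    rw [pow_succ', Module.End.mul_apply, ih]
    simp only [LinearMap.dualMap_apply]
    rw [pow_succ]
    simp [Module.End.mul_apply]

lemma isNilpotent_dualMap (f : Module.End K V) (hf : IsNilpotent f) :
    IsNilpotent (f.dualMap : Module.End K (Module.Dual K V)) := by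
  obtain ⟨k, hk⟩ := hf
  refine ⟨k, ?_⟩
  rw [dualMap_pow, hk]
  ext φ v
  simp

lemma adjoin_dualMap (f g : Module.End K V) :
    ∀ a ∈ Algebra.adjoin K ({f, g} : Set (Module.End K V)),
      (a.dualMap : Module.End K (Module.Dual K V)) ∈
        Algebra.adjoin K
          ({f.dualMap, g.dualMap} : Set (Module.End K (Module.Dual K V))) := by
  intro a ha
  induction ha using Algebra.adjoin_induction with
  | mem x hx =>
    rcases hx with h | h
    · subst h
      exact Algebra.subset_adjoin (Set.mem_insert _ _)
    · rw [Set.mem_singleton_iff] at h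
      subst h
      exact Algebra.subset_adjoin (Set.mem_insert_iff.mpr (Or.inr rfl))
  | algebraMap r =>
    have : ((algebraMap K (Module.End K V) r).dualMap :
        Module.End K (Module.Dual K V)) = algebraMap K _ r := by
      ext φ v
      rw [LinearMap.dualMap_apply, Module.algebraMap_end_apply,
        Module.algebraMap_end_apply, LinearMap.smul_apply, LinearMap.map_smul]
    rw [this]
    exact algebraMap_mem _ r
  | add x y hx hy ihx ihy =>
    have : ((x + y).dualMap : Module.End K (Module.Dual K V)) = x.dualMap + y.dualMap := by
      ext φ v
      simp [LinearMap.dualMap_apply]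
    rw [this]
    exact add_mem ihx ihy
  | mul x y hx hy ihx ihy =>
    have : ((x * y).dualMap : Module.End K (Module.Dual K V)) = y.dualMap * x.dualMap := by
      ext φ v
      simp [LinearMap.dualMap_apply, Module.End.mul_apply]
    rw [this]
    exact mul_mem ihy ihx

end Stmt18Aux

namespace Stmt18Aux


universe u v

lemma core {K : Type v} [Field K] (N : ℕ) :
    ∀ (V : Type u) [AddCommGroup V] [Module K V] [FiniteDimensional K V],
    Module.finrank K V ≤ N →
    ∀ (f g : Module.End K V) (i : V) (j : V →ₗ[K] K),
    IsNilpotent f → IsNilpotent g →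
    (∀ v, f (g v) - g (f v) + j v • i = 0) →
    ∀ a ∈ Algebra.adjoin K ({f, g} : Set (Module.End K V)), j (a i) = 0 := by
  induction N with
  | zero =>
    intro V _ _ _ hrank f g i j hf hg hrel a ha
    have h0 : Module.finrank K V = 0 := Nat.le_zero.mp hrank
    have hsub : Subsingleton V := (Module.finrank_zero_iff (R := K) (M := V)).mp h0
    have : i = (0 : V) := Subsingleton.elim _ _
    rw [this, map_zero, map_zero]
  | succ N ih =>
    intro V _ _ _ hrank f g i j hf hg hrel a ha
    by_cases hi : i = 0
    · rw [hi, map_zero, map_zero]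
    haveI hnontriv : Nontrivial V := nontrivial_of_ne i 0 hi
    set W : Submodule K V := Submodule.span K
      (Set.range fun b : Algebra.adjoin K ({f, g} : Set (Module.End K V)) =>
        (b : Module.End K V) i) with hWdef
    have hiW : i ∈ W := Submodule.subset_span ⟨⟨1, one_mem _⟩, by simp⟩
    have hgen : ∀ b ∈ Algebra.adjoin K ({f, g} : Set (Module.End K V)),
        (b : Module.End K V) i ∈ W := fun b hb => Submodule.subset_span ⟨⟨b, hb⟩, rfl⟩
    have hfad : f ∈ Algebra.adjoin K ({f, g} : Set (Module.End K V)) :=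
      Algebra.subset_adjoin (Set.mem_insert _ _)
    have hgad : g ∈ Algebra.adjoin K ({f, g} : Set (Module.End K V)) :=
      Algebra.subset_adjoin (Set.mem_insert_iff.mpr (Or.inr rfl))
    have hstab : ∀ (c : Module.End K V),
        c ∈ Algebra.adjoin K ({f, g} : Set (Module.End K V)) →
        ∀ x ∈ W, c x ∈ W := by
      intro c hc x hx
      induction hx using Submodule.span_induction with
      | mem x hxg =>
        obtain ⟨⟨b, hb⟩, rfl⟩ := hxg
        have : c ((b : Module.End K V) i) = ((c * b : Module.End K V)) i := rfl
        rw [this]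
        exact hgen _ (mul_mem hc hb)
      | zero => simp
      | add x y hx hy ihx ihy => rw [map_add]; exact add_mem ihx ihy
      | smul c' x hx ihx => rw [LinearMap.map_smul]; exact Submodule.smul_mem _ _ ihx
    have hfW : ∀ x ∈ W, f x ∈ W := hstab f hfad
    have hgW : ∀ x ∈ W, g x ∈ W := hstab g hgad
    by_cases hWtop : W = ⊤
    · set W'' : Submodule K V :=
        ⨅ b : Algebra.adjoin K ({f, g} : Set (Module.End K V)),
          LinearMap.ker (j ∘ₗ (b : Module.End K V)) with hW''def
      have hmemW'' : ∀ v : V, v ∈ W'' ↔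
          ∀ b ∈ Algebra.adjoin K ({f, g} : Set (Module.End K V)),
            j ((b : Module.End K V) v) = 0 := by
        intro v
        constructor
        · intro hv b hb
          have := Submodule.mem_iInf
            (fun b : Algebra.adjoin K ({f, g} : Set (Module.End K V)) =>
              LinearMap.ker (j ∘ₗ (b : Module.End K V))) |>.mp hv ⟨b, hb⟩
          simpa using this
        · intro h
          refine Submodule.mem_iInf _ |>.mpr fun b => ?_
          simpa using h b b.2
      by_cases hW'' : W'' = ⊥
      · -- hard case : derive a contradiction
        exfalso
        have hWcond : ∀ v : V,
            (∀ b ∈ Algebra.adjoin K ({f, g} : Set (Module.End K V)),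
              j ((b : Module.End K V) v) = 0) → v = 0 := by
          intro v hv
          have hv' : v ∈ W'' := (hmemW'' v).mpr hv
          rw [hW''] at hv'
          simpa using hv'
        obtain ⟨v0, hfv0, hjv0⟩ := beta f g i j hf hg hrel hWcond
        have hieq : i = (-(j v0)⁻¹) • f (g v0) := by
          have h1 := hrel v0
          rw [hfv0, map_zero, sub_zero] at h1
          have h2 : j v0 • i = - f (g v0) := by
            rw [eq_neg_iff_add_eq_zero, add_comm]
            exact h1
          have h3 : (j v0)⁻¹ • (j v0 • i) = (j v0)⁻¹ • (- f (g v0)) := by rw [h2]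
          rw [smul_smul, inv_mul_cancel₀ hjv0, one_smul] at h3
          rw [h3, smul_neg, ← neg_smul]
        -- dual configuration
        set F : Module.End K (Module.Dual K V) := f.dualMap with hF
        set G : Module.End K (Module.Dual K V) := g.dualMap with hG
        set I : Module.Dual K V := -j with hI
        set J : (Module.Dual K V) →ₗ[K] K := Module.Dual.eval K V i with hJ
        have hrelD : ∀ φ : Module.Dual K V, F (G φ) - G (F φ) + J φ • I = 0 := by
          intro φ
          ext v
          have expand : (F (G φ) - G (F φ) + J φ • I) v
              = φ (g (f v)) - φ (f (g v)) + φ i * (- j v) := by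
            simp [hF, hG, hI, hJ, LinearMap.dualMap_apply, Module.Dual.eval_apply,
              LinearMap.sub_apply, LinearMap.add_apply, LinearMap.smul_apply,
              smul_eq_mul]
          rw [expand]
          have h4 : φ (f (g v) - g (f v) + j v • i) = 0 := by rw [hrel v, map_zero]
          rw [map_add, map_sub, LinearMap.map_smul, smul_eq_mul] at h4
          simp only [LinearMap.zero_apply]
          linear_combination -h4
        have hFnil : IsNilpotent F := isNilpotent_dualMap f hf
        have hGnil : IsNilpotent G := isNilpotent_dualMap g hg
        haveI : Nontrivial (Module.Dual K V) := by
          have hfr : 0 < Module.finrank K (Module.Dual K V) := by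
            rw [Subspace.dual_finrank_eq]
            exact Module.finrank_pos
          exact Module.nontrivial_of_finrank_pos hfr
        have hWcondD : ∀ φ : Module.Dual K V,
            (∀ A ∈ Algebra.adjoin K ({F, G} : Set (Module.End K (Module.Dual K V))),
              J ((A : Module.End K (Module.Dual K V)) φ) = 0) → φ = 0 := by
          intro φ hφ
          have hkill : ∀ b ∈ Algebra.adjoin K ({f, g} : Set (Module.End K V)),
              φ ((b : Module.End K V) i) = 0 := by
            intro b hb
            have hmem : (b.dualMap : Module.End K (Module.Dual K V)) ∈
                Algebra.adjoin K ({F, G} : Set (Module.End K (Module.Dual K V))) :=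
              adjoin_dualMap f g b hb
            have := hφ _ hmem
            simpa [hJ, Module.Dual.eval_apply, LinearMap.dualMap_apply] using this
          ext v
          have hvW : v ∈ W := by rw [hWtop]; trivial
          simp only [LinearMap.zero_apply]
          induction hvW using Submodule.span_induction with
          | mem x hxg =>
            obtain ⟨⟨b, hb⟩, rfl⟩ := hxg
            exact hkill b hb
          | zero => simp
          | add x y hx hy ihx ihy => rw [map_add, ihx, ihy, add_zero]
          | smul c x hx ihx => rw [LinearMap.map_smul, ihx, smul_zero]
        obtain ⟨φ, hFφ, hJφ⟩ := beta F G I J hFnil hGnil hrelD hWcondD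
        have hφf : ∀ v, φ (f v) = 0 := by
          intro v
          have : (f.dualMap φ) v = (0 : Module.Dual K V) v := by rw [← hF, hFφ]
          simpa [LinearMap.dualMap_apply] using this
        have : J φ = 0 := by
          rw [hJ, Module.Dual.eval_apply, hieq, LinearMap.map_smul, hφf, smul_zero]
        exact hJφ this
      · -- quotient case
        have hleW'' : W'' ≤ W''.comap f := by
          intro v hv
          rw [Submodule.mem_comap]
          rw [hmemW''] at hv ⊢
          intro b hb
          have : (b : Module.End K V) (f v) = ((b * f : Module.End K V)) v := rfl
          rw [this]
          exact hv _ (mul_mem hb hfad)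
        have hleW''g : W'' ≤ W''.comap g := by
          intro v hv
          rw [Submodule.mem_comap]
          rw [hmemW''] at hv ⊢
          intro b hb
          have : (b : Module.End K V) (g v) = ((b * g : Module.End K V)) v := rfl
          rw [this]
          exact hv _ (mul_mem hb hgad)
        have hjW'' : W'' ≤ LinearMap.ker j := by
          intro v hv
          rw [hmemW''] at hv
          rw [LinearMap.mem_ker]
          have := hv 1 (one_mem _)
          simpa using this
        set Q := V ⧸ W''
        set fb : Module.End K Q := W''.mapQ W'' f hleW'' with hfb
        set gb : Module.End K Q := W''.mapQ W'' g hleW''g with hgb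
        set ib : Q := W''.mkQ i with hib
        set jb : Q →ₗ[K] K := W''.liftQ j hjW'' with hjb
        have hfmk : ∀ w : V, fb (W''.mkQ w) = W''.mkQ (f w) := by
          intro w
          rw [hfb, Submodule.mkQ_apply, Submodule.mapQ_apply, Submodule.mkQ_apply]
        have hgmk : ∀ w : V, gb (W''.mkQ w) = W''.mkQ (g w) := by
          intro w
          rw [hgb, Submodule.mkQ_apply, Submodule.mapQ_apply, Submodule.mkQ_apply]
        have hjmk : ∀ w : V, jb (W''.mkQ w) = j w := by
          intro w
          rw [hjb, Submodule.mkQ_apply, Submodule.liftQ_apply]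
        have hfbnil : IsNilpotent fb := by
          obtain ⟨k, hk⟩ := hf
          refine ⟨k, ?_⟩
          apply LinearMap.ext
          intro q
          obtain ⟨v, rfl⟩ := W''.mkQ_surjective q
          rw [hfb, ← Submodule.mapQ_pow, Submodule.mkQ_apply, Submodule.mapQ_apply, hk]
          simp
        have hgbnil : IsNilpotent gb := by
          obtain ⟨k, hk⟩ := hg
          refine ⟨k, ?_⟩
          apply LinearMap.ext
          intro q
          obtain ⟨v, rfl⟩ := W''.mkQ_surjective q
          rw [hgb, ← Submodule.mapQ_pow, Submodule.mkQ_apply, Submodule.mapQ_apply, hk]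
          simp
        have hrelb : ∀ x : Q, fb (gb x) - gb (fb x) + jb x • ib = 0 := by
          intro x
          obtain ⟨v, rfl⟩ := W''.mkQ_surjective x
          rw [hgmk v, hfmk (g v), hfmk v, hgmk (f v), hjmk v, hib,
            ← LinearMap.map_smul, ← map_sub, ← map_add, hrel v, map_zero]
        have hW''pos : 0 < Module.finrank K W'' := by
          rcases Nat.eq_zero_or_pos (Module.finrank K W'') with h0 | hpos
          · exact absurd (Submodule.finrank_eq_zero.mp h0) hW''
          · exact hpos
        have hq : Module.finrank K Q + Module.finrank K W'' = Module.finrank K V :=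
          Submodule.finrank_quotient_add_finrank W''
        have hqle : Module.finrank K Q ≤ N := by omega
        obtain ⟨a', ha', ea⟩ := adjoin_mapQ f g hleW'' hleW''g a ha
        have hres := ih Q hqle fb gb ib jb hfbnil hgbnil hrelb a' ha'
        have h5 : jb (W''.mkQ (a i)) = j (a i) := Submodule.liftQ_apply _ _ _
        rw [← h5, ← ea i]
        exact hres
    · -- restriction case
      haveI : FiniteDimensional K W := inferInstance
      have hlt : Module.finrank K W < Module.finrank K V :=
        Submodule.finrank_lt hWtop
      have hle : Module.finrank K W ≤ N := by omega
      set f' := f.restrict hfW with hf'def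
      set g' := g.restrict hgW with hg'def
      have hf' : IsNilpotent f' := isNilpotent_restrict f hf hfW
      have hg' : IsNilpotent g' := isNilpotent_restrict g hg hgW
      set i' : W := ⟨i, hiW⟩ with hi'def
      set j' : W →ₗ[K] K := j.comp W.subtype with hj'def
      have hrel' : ∀ w : W, f' (g' w) - g' (f' w) + j' w • i' = 0 := by
        intro w
        apply Subtype.ext
        have hco : ((f' (g' w) - g' (f' w) + j' w • i' : W) : V)
            = f (g (w : V)) - g (f (w : V)) + j (w : V) • i := by
          simp [hf'def, hg'def, hi'def, hj'def, LinearMap.restrict_apply]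
        rw [hco, hrel]
        rfl
      obtain ⟨a', ha', ea⟩ := adjoin_restrict f g hfW hgW a ha
      have hres := ih W hle f' g' i' j' hf' hg' hrel' a' ha'
      have : a i = ((a' i' : W) : V) := ea i'
      rw [this]
      exact hres


end Stmt18Aux


namespace Stmt18Aux

variable {K : Type*} [Field K]

lemma dec_left (p : FreeAlgebra K (Fin 2)) :
    ∃ (c : K) (q0 q1 : FreeAlgebra K (Fin 2)),
      p = c • 1 + FreeAlgebra.ι K (0 : Fin 2) * q0 + FreeAlgebra.ι K (1 : Fin 2) * q1 := by
  induction p using FreeAlgebra.induction with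
  | grade0 r => exact ⟨r, 0, 0, by simp [Algebra.algebraMap_eq_smul_one]⟩
  | grade1 x =>
    fin_cases x
    · exact ⟨0, 1, 0, by simp⟩
    · exact ⟨0, 0, 1, by simp⟩
  | add a b iha ihb =>
    obtain ⟨c, q0, q1, rfl⟩ := iha
    obtain ⟨d, r0, r1, hb⟩ := ihb
    refine ⟨c + d, q0 + r0, q1 + r1, ?_⟩
    rw [hb]
    simp only [add_smul, mul_add]
    abel
  | mul a b iha ihb =>
    obtain ⟨c, q0, q1, ha⟩ := iha
    obtain ⟨d, r0, r1, hb⟩ := ihb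
    refine ⟨c * d, c • r0 + q0 * b, c • r1 + q1 * b, ?_⟩
    rw [ha, hb]
    simp only [add_mul, smul_mul_assoc, one_mul, mul_add, mul_smul_comm, mul_assoc, smul_add,
      smul_smul, mul_comm d c]
    abel
  
lemma dec_right (p : FreeAlgebra K (Fin 2)) :
    ∃ (c : K) (q0 q1 : FreeAlgebra K (Fin 2)),
      p = c • 1 + q0 * FreeAlgebra.ι K (0 : Fin 2) + q1 * FreeAlgebra.ι K (1 : Fin 2) := by
  induction p using FreeAlgebra.induction with
  | grade0 r => exact ⟨r, 0, 0, by simp [Algebra.algebraMap_eq_smul_one]⟩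
  | grade1 x =>
    fin_cases x
    · exact ⟨0, 1, 0, by simp⟩
    · exact ⟨0, 0, 1, by simp⟩
  | add a b iha ihb =>
    obtain ⟨c, q0, q1, rfl⟩ := iha
    obtain ⟨d, r0, r1, hb⟩ := ihb
    refine ⟨c + d, q0 + r0, q1 + r1, ?_⟩
    rw [hb]
    simp only [add_smul, add_mul]
    abel
  | mul a b iha ihb =>
    obtain ⟨c, q0, q1, ha⟩ := iha
    obtain ⟨d, r0, r1, hb⟩ := ihb
    refine ⟨c * d, d • q0 + a * r0, d • q1 + a * r1, ?_⟩
    rw [ha, hb]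
    simp only [mul_add, mul_smul_comm, smul_add, smul_smul, add_mul, smul_mul_assoc, mul_one,
      mul_assoc, mul_comm d c]
    abel

lemma isNilpotent_mapQ {V : Type*} [AddCommGroup V] [Module K V]
    (f : Module.End K V) (hf : IsNilpotent f) {W : Submodule K V}
    (h : W ≤ W.comap f) : IsNilpotent (W.mapQ W f h) := by
  obtain ⟨k, hk⟩ := hf
  refine ⟨k, ?_⟩
  apply LinearMap.ext
  intro q
  obtain ⟨v, rfl⟩ := W.mkQ_surjective q
  rw [← Submodule.mapQ_pow, Submodule.mkQ_apply, Submodule.mapQ_apply, hk]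
  simp

lemma vecMulVec_mulVec' {n : ℕ} (u w v : Fin n → K) :
    Matrix.vecMulVec u w *ᵥ v = (w ⬝ᵥ v) • u := by
  ext k
  simp only [Matrix.mulVec, dotProduct, Matrix.vecMulVec_apply, Pi.smul_apply,
    smul_eq_mul, Finset.sum_mul]
  exact Finset.sum_congr rfl fun b _ => by ring

/-- dot-product pairing as a linear map into the dual -/
noncomputable def dotL {n : ℕ} (u : Fin n → K) : (Fin n → K) →ₗ[K] K where
  toFun v := u ⬝ᵥ v
  map_add' x y := dotProduct_add u x y
  map_smul' c x := dotProduct_smul c u x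

@[simp] lemma dotL_apply {n : ℕ} (u v : Fin n → K) : dotL u v = u ⬝ᵥ v := rfl

noncomputable def Dmap {n : ℕ} : (Fin n → K) →ₗ[K] Module.Dual K (Fin n → K) where
  toFun := dotL
  map_add' x y := by ext v; simp [add_dotProduct]
  map_smul' c x := by ext v; simp [smul_dotProduct]

@[simp] lemma Dmap_apply {n : ℕ} (u v : Fin n → K) : (Dmap u : Module.Dual K (Fin n → K)) v = u ⬝ᵥ v := rfl

lemma Dmap_injective {n : ℕ} : Function.Injective (Dmap : (Fin n → K) →ₗ[K] _) := by
  intro u w huw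
  funext k
  have := congrArg (fun φ => φ (Pi.single k 1)) huw
  simpa [dotProduct_single] using this

lemma mulVecLin_pow {n : ℕ} (M : Matrix (Fin n) (Fin n) K) (k : ℕ) :
    (M.mulVecLin) ^ k = (M ^ k).mulVecLin := by
  induction k with
  | zero => rw [pow_zero, pow_zero, Matrix.mulVecLin_one]; rfl
  | succ t ih => rw [pow_succ, pow_succ, ih, Matrix.mulVecLin_mul]; rfl

end Stmt18Aux



open Matrix

theorem stmt18 {n : ℕ} {K : Type*} [Field K]
    (hchar : ∀ p : ℕ, CharP K p → p = 0 ∨ n ≤ 2 * p)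
    (X Y : Matrix (Fin n) (Fin n) K) (i j : Fin n → K)
    (hX : IsNilpotent X) (hY : IsNilpotent Y)
    (hc : X * Y - Y * X + Matrix.vecMulVec i j = 0)
    (r s : ℕ)
    (hr : r = Module.finrank K (Submodule.span K
      (Set.range fun p : FreeAlgebra K (Fin 2) => (FreeAlgebra.lift K ![X, Y] p) *ᵥ i)))
    (hs : s = Module.finrank K (Submodule.span K
      (Set.range fun p : FreeAlgebra K (Fin 2) => j ᵥ* (FreeAlgebra.lift K ![X, Y] p)))) :
    r + s ≤ n ∧ (0 < r → 0 < s → r + s ≤ n - 1) := by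
  classical
  classical
  set ev : FreeAlgebra K (Fin 2) →ₐ[K] Matrix (Fin n) (Fin n) K :=
    FreeAlgebra.lift K ![X, Y] with hev
  set f : Module.End K (Fin n → K) := X.mulVecLin with hfdef
  set g : Module.End K (Fin n → K) := Y.mulVecLin with hgdef
  have hfnil : IsNilpotent f := by
    obtain ⟨k, hk⟩ := hX
    exact ⟨k, by rw [hfdef, Stmt18Aux.mulVecLin_pow, hk, Matrix.mulVecLin_zero]⟩
  have hgnil : IsNilpotent g := by
    obtain ⟨k, hk⟩ := hY
    exact ⟨k, by rw [hgdef, Stmt18Aux.mulVecLin_pow, hk, Matrix.mulVecLin_zero]⟩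
  have hevX : ev (FreeAlgebra.ι K (0 : Fin 2)) = X := by
    rw [hev, FreeAlgebra.lift_ι_apply, Matrix.cons_val_zero]
  have hevY : ev (FreeAlgebra.ι K (1 : Fin 2)) = Y := by
    rw [hev, FreeAlgebra.lift_ι_apply, Matrix.cons_val_one, Matrix.cons_val_zero]
  have hrelm : ∀ v : Fin n → K, f (g v) - g (f v) + (Stmt18Aux.dotL j) v • i = 0 := by
    intro v
    have h1 : (X * Y - Y * X + Matrix.vecMulVec i j) *ᵥ v = 0 := by rw [hc, Matrix.zero_mulVec]
    rw [Matrix.add_mulVec, Matrix.sub_mulVec, Stmt18Aux.vecMulVec_mulVec'] at h1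
    simpa [hfdef, hgdef, Matrix.mulVecLin_apply, Matrix.mulVec_mulVec] using h1
  have hadj : ∀ p, (ev p).mulVecLin ∈
      Algebra.adjoin K ({f, g} : Set (Module.End K (Fin n → K))) := by
    intro p
    induction p using FreeAlgebra.induction with
    | grade0 c =>
      rw [AlgHom.commutes]
      have h3 : (algebraMap K (Matrix (Fin n) (Fin n) K) c).mulVecLin
          = algebraMap K (Module.End K (Fin n → K)) c := by
        apply LinearMap.ext; intro v
        rw [Matrix.mulVecLin_apply, Algebra.algebraMap_eq_smul_one, Matrix.smul_mulVec,
          Matrix.one_mulVec, Module.algebraMap_end_apply]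
      rw [h3]; exact algebraMap_mem _ c
    | grade1 x =>
      fin_cases x
      · show (ev (FreeAlgebra.ι K (0 : Fin 2))).mulVecLin ∈ _
        rw [hevX]
        exact Algebra.subset_adjoin (Set.mem_insert _ _)
      · show (ev (FreeAlgebra.ι K (1 : Fin 2))).mulVecLin ∈ _
        rw [hevY]
        exact Algebra.subset_adjoin (Set.mem_insert_iff.mpr (Or.inr rfl))
    | mul a b iha ihb =>
      rw [_root_.map_mul, Matrix.mulVecLin_mul]
      exact mul_mem iha ihb
    | add a b iha ihb =>
      have h4 : ∀ (A B : Matrix (Fin n) (Fin n) K), (A + B).mulVecLin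
          = A.mulVecLin + B.mulVecLin := by
        intro A B
        apply LinearMap.ext; intro v
        simp [Matrix.mulVecLin_apply, Matrix.add_mulVec]
      rw [_root_.map_add, h4]
      exact add_mem iha ihb
  have claimA : ∀ p, j ⬝ᵥ (ev p *ᵥ i) = 0 := by
    intro p
    have hcore := Stmt18Aux.core (K := K) (Module.finrank K (Fin n → K)) (Fin n → K) le_rfl f g i (Stmt18Aux.dotL j)
      hfnil hgnil hrelm ((ev p).mulVecLin) (hadj p)
    simpa [Matrix.mulVecLin_apply] using hcore
  set W : Submodule K (Fin n → K) :=
    Submodule.span K (Set.range fun p : FreeAlgebra K (Fin 2) => ev p *ᵥ i) with hW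
  set W' : Submodule K (Fin n → K) :=
    Submodule.span K (Set.range fun p : FreeAlgebra K (Fin 2) => j ᵥ* ev p) with hW'
  have orth : ∀ q p : FreeAlgebra K (Fin 2), (j ᵥ* ev q) ⬝ᵥ (ev p *ᵥ i) = 0 := by
    intro q p
    rw [← Matrix.dotProduct_mulVec, Matrix.mulVec_mulVec, ← _root_.map_mul]
    exact claimA (q * p)
  have horthW' : ∀ w' ∈ W', ∀ p, w' ⬝ᵥ (ev p *ᵥ i) = 0 := by
    intro w' hw'
    induction hw' using Submodule.span_induction with
    | mem x hx =>
      obtain ⟨q, rfl⟩ := hx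
      exact fun p => orth q p
    | zero => intro p; rw [zero_dotProduct]
    | add x y hx hy ihx ihy => intro p; rw [add_dotProduct, ihx p, ihy p, add_zero]
    | smul c x hx ihx => intro p; rw [smul_dotProduct, ihx p, smul_zero]
  set P : Submodule K (Fin n → K) :=
    (W'.map (Stmt18Aux.Dmap : (Fin n → K) →ₗ[K] Module.Dual K (Fin n → K))).dualCoannihilator with hP
  have hWP : W ≤ P := by
    rw [hW]
    apply Submodule.span_le.mpr
    rintro _ ⟨p, rfl⟩
    rw [SetLike.mem_coe, Submodule.mem_dualCoannihilator]
    rintro φ ⟨w', hw', rfl⟩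
    exact horthW' w' hw' p
  have hsP : s + Module.finrank K P = n := by
    have e1 : Module.finrank K (W'.map (Stmt18Aux.Dmap : (Fin n → K) →ₗ[K] Module.Dual K (Fin n → K)))
        = Module.finrank K W' :=
      (LinearEquiv.finrank_eq (Submodule.equivMapOfInjective _ Stmt18Aux.Dmap_injective W')).symm
    have e2 := Subspace.finrank_add_finrank_dualCoannihilator_eq
      (W'.map (Stmt18Aux.Dmap : (Fin n → K) →ₗ[K] Module.Dual K (Fin n → K)))
    rw [e1, ← hs, ← hP, Module.finrank_fin_fun] at e2
    exact e2
  have hrW : r = Module.finrank K W := hr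
  have hfinP : Module.finrank K W ≤ Module.finrank K P := Submodule.finrank_mono hWP
  have part1 : r + s ≤ n := by omega
  refine ⟨part1, ?_⟩
  intro hr0 hs0
  by_contra hcon
  have hrs : r + s = n := by omega
  have hWPeq : W = P := Submodule.eq_of_le_of_finrank_le hWP (by omega)
  have hiW : i ∈ W := by
    rw [hW]
    apply Submodule.subset_span
    exact ⟨1, by beta_reduce; rw [_root_.map_one, Matrix.one_mulVec]⟩
  have hjmemW' : j ∈ W' := by
    rw [hW']
    apply Submodule.subset_span
    exact ⟨1, by beta_reduce; rw [_root_.map_one, Matrix.vecMul_one]⟩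
  have hjW : ∀ w ∈ W, j ⬝ᵥ w = 0 := by
    intro w hw
    have hwP : w ∈ P := hWPeq ▸ hw
    rw [hP, Submodule.mem_dualCoannihilator] at hwP
    have := hwP (Stmt18Aux.Dmap j) (Submodule.mem_map_of_mem hjmemW')
    simpa using this
  have hWstab : ∀ (q : FreeAlgebra K (Fin 2)), ∀ w ∈ W, ev q *ᵥ w ∈ W := by
    intro q w hw
    rw [hW] at hw ⊢
    induction hw using Submodule.span_induction with
    | mem x hx =>
      obtain ⟨p, rfl⟩ := hx
      apply Submodule.subset_span
      exact ⟨q * p, by beta_reduce; rw [_root_.map_mul, ← Matrix.mulVec_mulVec]⟩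
    | zero => rw [Matrix.mulVec_zero]; exact Submodule.zero_mem _
    | add x y hx hy ihx ihy => rw [Matrix.mulVec_add]; exact Submodule.add_mem _ ihx ihy
    | smul c x hx ihx => rw [Matrix.mulVec_smul]; exact Submodule.smul_mem _ _ ihx
  have hWinvX : ∀ w ∈ W, X *ᵥ w ∈ W := by
    intro w hw
    have h5 := hWstab (FreeAlgebra.ι K (0 : Fin 2)) w hw
    rwa [hevX] at h5
  have hWinvY : ∀ w ∈ W, Y *ᵥ w ∈ W := by
    intro w hw
    have h5 := hWstab (FreeAlgebra.ι K (1 : Fin 2)) w hw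
    rwa [hevY] at h5
  have hfW : ∀ x ∈ W, f x ∈ W := fun x hx => by
    rw [hfdef, Matrix.mulVecLin_apply]; exact hWinvX x hx
  have hgW : ∀ x ∈ W, g x ∈ W := fun x hx => by
    rw [hgdef, Matrix.mulVecLin_apply]; exact hWinvY x hx
  have hcommW : ∀ w ∈ W, f (g w) = g (f w) := by
    intro w hw
    have h6 := hrelm w
    rw [Stmt18Aux.dotL_apply, hjW w hw, zero_smul, add_zero, sub_eq_zero] at h6
    exact h6
  set M : Submodule K (Fin n → K) := (W.map f) ⊔ (W.map g) with hM
  have hiM : i ∉ M := by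
    intro him
    have hMW : M ≤ W := by
      rw [hM]
      apply sup_le
      · exact Submodule.map_le_iff_le_comap.mpr fun w hw => hfW w hw
      · exact Submodule.map_le_iff_le_comap.mpr fun w hw => hgW w hw
    have hWM : W ≤ M := by
      conv_lhs => rw [hW]
      apply Submodule.span_le.mpr
      rintro _ ⟨p, rfl⟩
      obtain ⟨c, q0, q1, rfl⟩ := Stmt18Aux.dec_left p
      beta_reduce
      have h7 : ev (c • 1 + FreeAlgebra.ι K (0 : Fin 2) * q0
            + FreeAlgebra.ι K (1 : Fin 2) * q1) *ᵥ i
          = c • i + X *ᵥ (ev q0 *ᵥ i) + Y *ᵥ (ev q1 *ᵥ i) := by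
        rw [_root_.map_add, _root_.map_add, _root_.map_smul, _root_.map_one,
          _root_.map_mul, _root_.map_mul, hevX, hevY,
          Matrix.add_mulVec, Matrix.add_mulVec, Matrix.smul_mulVec, Matrix.one_mulVec,
          ← Matrix.mulVec_mulVec, ← Matrix.mulVec_mulVec]
      rw [h7]
      refine Submodule.add_mem _ (Submodule.add_mem _ ?_ ?_) ?_
      · exact Submodule.smul_mem _ _ him
      · refine Submodule.mem_sup_left (Submodule.mem_map_of_mem ?_)
        rw [hW]; exact Submodule.subset_span ⟨q0, rfl⟩
      · refine Submodule.mem_sup_right (Submodule.mem_map_of_mem ?_)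
        rw [hW]; exact Submodule.subset_span ⟨q1, rfl⟩
    have hWMeq : W = M := le_antisymm hWM hMW
    set f₁ : Module.End K W := f.restrict hfW with hf₁
    set g₁ : Module.End K W := g.restrict hgW with hg₁
    have hf₁nil : IsNilpotent f₁ := Stmt18Aux.isNilpotent_restrict f hfnil hfW
    have hg₁nil : IsNilpotent g₁ := Stmt18Aux.isNilpotent_restrict g hgnil hgW
    have hcomm₁ : ∀ u : W, f₁ (g₁ u) = g₁ (f₁ u) := by
      intro u
      apply Subtype.ext
      have e5 : ((f₁ (g₁ u) : W) : Fin n → K) = f (g (u : Fin n → K)) := rfl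
      have e6 : ((g₁ (f₁ u) : W) : Fin n → K) = g (f (u : Fin n → K)) := rfl
      rw [e5, e6]
      exact hcommW _ u.2
    haveI : Nontrivial W := Module.nontrivial_of_finrank_pos (by rw [← hrW]; exact hr0)
    haveI : Nontrivial (Module.Dual K W) := by
      apply Module.nontrivial_of_finrank_pos (R := K)
      rw [Subspace.dual_finrank_eq]
      exact Module.finrank_pos
    have hcommD : ∀ φ : Module.Dual K W,
        f₁.dualMap (g₁.dualMap φ) = g₁.dualMap (f₁.dualMap φ) := by
      intro φ
      apply LinearMap.ext; intro u
      simp only [LinearMap.dualMap_apply]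
      rw [hcomm₁ u]
    obtain ⟨φ, hφ0, hFφ, hGφ⟩ := Stmt18Aux.exists_common_ker (K := K) f₁.dualMap g₁.dualMap
      (Stmt18Aux.isNilpotent_dualMap _ hf₁nil) (Stmt18Aux.isNilpotent_dualMap _ hg₁nil) hcommD
    apply hφ0
    apply LinearMap.ext; intro u
    have huM : (u : Fin n → K) ∈ M := by rw [← hWMeq]; exact u.2
    rw [hM, Submodule.mem_sup] at huM
    obtain ⟨aa, haa, bb, hbb, hab⟩ := huM
    obtain ⟨w₁, hw₁, rfl⟩ := haa
    obtain ⟨w₂, hw₂, rfl⟩ := hbb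
    have hu : u = f₁ ⟨w₁, hw₁⟩ + g₁ ⟨w₂, hw₂⟩ := by
      apply Subtype.ext
      rw [← hab]
      rfl
    rw [hu, map_add]
    have e3 : φ (f₁ ⟨w₁, hw₁⟩) = (f₁.dualMap φ) ⟨w₁, hw₁⟩ := rfl
    have e4 : φ (g₁ ⟨w₂, hw₂⟩) = (g₁.dualMap φ) ⟨w₂, hw₂⟩ := rfl
    rw [e3, e4, hFφ, hGφ]
    simp
  -- quotient configuration
  have hcomapf : W ≤ W.comap f := fun x hx => Submodule.mem_comap.mpr (hfW x hx)
  have hcomapg : W ≤ W.comap g := fun x hx => Submodule.mem_comap.mpr (hgW x hx)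
  set fb : Module.End K ((Fin n → K) ⧸ W) := W.mapQ W f hcomapf with hfb
  set gb : Module.End K ((Fin n → K) ⧸ W) := W.mapQ W g hcomapg with hgb
  have hfbnil : IsNilpotent fb := Stmt18Aux.isNilpotent_mapQ f hfnil hcomapf
  have hgbnil : IsNilpotent gb := Stmt18Aux.isNilpotent_mapQ g hgnil hcomapg
  have hcommb : ∀ x, fb (gb x) = gb (fb x) := by
    intro x
    obtain ⟨v, rfl⟩ := W.mkQ_surjective x
    rw [hfb, hgb]
    simp only [Submodule.mkQ_apply, Submodule.mapQ_apply]
    rw [Submodule.Quotient.eq]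
    have h9 := hrelm v
    have h10 : f (g v) - g (f v) = -((Stmt18Aux.dotL j) v • i) :=
      eq_neg_of_add_eq_zero_left h9
    rw [h10]
    exact Submodule.neg_mem _ (Submodule.smul_mem _ _ hiW)
  haveI : Nontrivial ((Fin n → K) ⧸ W) := by
    refine Submodule.Quotient.nontrivial_iff.mpr (ne_of_lt ?_)
    rw [lt_top_iff_ne_top]
    intro htop
    rw [htop, finrank_top, Module.finrank_fin_fun] at hrW
    omega
  obtain ⟨xq, hxq0, hfbx, hgbx⟩ := Stmt18Aux.exists_common_ker (K := K) fb gb hfbnil hgbnil hcommb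
  obtain ⟨v, rfl⟩ := W.mkQ_surjective xq
  have hvW : v ∉ W := by
    intro hvW
    apply hxq0
    rwa [Submodule.mkQ_apply, Submodule.Quotient.mk_eq_zero]
  have hXv : X *ᵥ v ∈ W := by
    have h11 := hfbx
    rw [hfb, Submodule.mkQ_apply, Submodule.mapQ_apply, Submodule.Quotient.mk_eq_zero] at h11
    rwa [hfdef, Matrix.mulVecLin_apply] at h11
  have hYv : Y *ᵥ v ∈ W := by
    have h11 := hgbx
    rw [hgb, Submodule.mkQ_apply, Submodule.mapQ_apply, Submodule.Quotient.mk_eq_zero] at h11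
    rwa [hgdef, Matrix.mulVecLin_apply] at h11
  have hjv : j ⬝ᵥ v ≠ 0 := by
    intro hjv0
    apply hvW
    have hkill : ∀ w' ∈ W', w' ⬝ᵥ v = 0 := by
      intro w' hw'
      induction hw' using Submodule.span_induction with
      | mem x hx =>
        obtain ⟨q, rfl⟩ := hx
        obtain ⟨c, q0, q1, rfl⟩ := Stmt18Aux.dec_right q
        beta_reduce
        rw [← Matrix.dotProduct_mulVec]
        have h12 : ev (c • 1 + q0 * FreeAlgebra.ι K (0 : Fin 2)
              + q1 * FreeAlgebra.ι K (1 : Fin 2)) *ᵥ v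
            = c • v + ev q0 *ᵥ (X *ᵥ v) + ev q1 *ᵥ (Y *ᵥ v) := by
          rw [_root_.map_add, _root_.map_add, _root_.map_smul, _root_.map_one,
          _root_.map_mul, _root_.map_mul, hevX, hevY,
            Matrix.add_mulVec, Matrix.add_mulVec, Matrix.smul_mulVec, Matrix.one_mulVec,
            ← Matrix.mulVec_mulVec, ← Matrix.mulVec_mulVec]
        rw [h12, dotProduct_add, dotProduct_add, dotProduct_smul,
          hjv0, smul_zero, zero_add, hjW _ (hWstab q0 _ hXv), hjW _ (hWstab q1 _ hYv),
          add_zero]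
      | zero => rw [zero_dotProduct]
      | add x y hx hy ihx ihy => rw [add_dotProduct, ihx, ihy, add_zero]
      | smul c x hx ihx => rw [smul_dotProduct, ihx, smul_zero]
    have hvP : v ∈ P := by
      rw [hP, Submodule.mem_dualCoannihilator]
      rintro φ ⟨w', hw', rfl⟩
      exact hkill w' hw'
    rwa [← hWPeq] at hvP
  -- final contradiction
  have h13 := hrelm v
  have h14 : (Stmt18Aux.dotL j) v • i = g (f v) - f (g v) := by
    have := eq_neg_of_add_eq_zero_right h13
    rw [this, neg_sub]
  have hieq : i = (j ⬝ᵥ v)⁻¹ • (g (f v) - f (g v)) := by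
    rw [← h14, Stmt18Aux.dotL_apply, smul_smul, inv_mul_cancel₀ hjv, one_smul]
  apply hiM
  rw [hieq]
  refine Submodule.smul_mem _ _ (Submodule.sub_mem _ ?_ ?_)
  · exact Submodule.mem_sup_right (Submodule.mem_map_of_mem hXv)
  · exact Submodule.mem_sup_left (Submodule.mem_map_of_mem hYv)
end
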